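/- arXiv:2001.08468 — 7 statements merged into one kernel-verified Lean document; each statement's English description precedes it below -/
import Mathlib

section
/- Let I' be an SMI instance with men m_1, …, m_n and women w_1, …, w_n, and let I be its padded instance. Then: (i) every WSNM of I contains both (m_0, w_0) and (m_{n+1}, w_{n+1}); (ii) a matching M' is a WSNM of I' if and only if M' ∪ {(m_0, w_0), (m_{n+1}, w_{n+1})} is a WSNM of I; and consequently (iii) opt(I) = opt(I') + 2, where opt(J) denotes the maximum size of a WSNM of instance J. -/
open scoped Classical

/-- An SMTI instance: men of type `Mty`, women of type `Wty`.
`mpref m w = some r` means `w` appears on `m`'s preference list with rank `r`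
(smaller rank = more preferred; equal ranks = tied); `none` means `w` is not on `m`'s list.
Similarly for `wpref`.  A pair is acceptable when each lists the other. -/
structure SMTI (Mty : Type) (Wty : Type) where
  mpref : Mty → Wty → Option ℕ
  wpref : Wty → Mty → Option ℕ

namespace SMTI

variable {Mty Wty : Type}

/-- Rank of an optional preference-list entry: `⊤` for an absent entry
(so that being single / unacceptable is worse than any listed partner). -/
def rk (o : Option ℕ) : ℕ∞ := o.elim ⊤ (fun r => (r : ℕ∞))

/-- `(m, w)` is an acceptable pair. -/
def Acc (I : SMTI Mty Wty) (m : Mty) (w : Wty) : Prop :=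
  (I.mpref m w).isSome ∧ (I.wpref w m).isSome

/-- `M` is a matching: a set of acceptable pairs in which each person appears at most once. -/
def IsMatching (I : SMTI Mty Wty) (M : Finset (Mty × Wty)) : Prop :=
  (∀ p ∈ M, I.Acc p.1 p.2) ∧
  (∀ p ∈ M, ∀ q ∈ M, (p.1 = q.1 ∨ p.2 = q.2) → p = q)

/-- Two pairs cross iff one pair's man is above the other pair's man
while its woman is below the other pair's woman. -/
def Crossing [Preorder Mty] [Preorder Wty] (p q : Mty × Wty) : Prop :=
  (p.1 < q.1 ∧ q.2 < p.2) ∨ (q.1 < p.1 ∧ p.2 < q.2)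

/-- A set of pairs is noncrossing if no two of its pairs cross. -/
def Noncrossing [Preorder Mty] [Preorder Wty] (M : Finset (Mty × Wty)) : Prop :=
  ∀ p ∈ M, ∀ q ∈ M, ¬ Crossing p q

/-- `(m, w)` is a (weak) blocking pair for `M`: an acceptable pair not in `M`
such that `m` strictly prefers `w` to his partner in `M` (or is single) and
`w` strictly prefers `m` to her partner in `M` (or is single). -/
def Blocks (I : SMTI Mty Wty) (M : Finset (Mty × Wty)) (m : Mty) (w : Wty) : Prop :=
  I.Acc m w ∧ (m, w) ∉ M ∧
  (∀ w', (m, w') ∈ M → rk (I.mpref m w) < rk (I.mpref m w')) ∧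
  (∀ m', (m', w) ∈ M → rk (I.wpref w m) < rk (I.wpref w m'))

/-- A noncrossing (weak) blocking pair: a blocking pair crossing no pair of `M`. -/
def NCBlocks [Preorder Mty] [Preorder Wty] (I : SMTI Mty Wty) (M : Finset (Mty × Wty))
    (m : Mty) (w : Wty) : Prop :=
  I.Blocks M m w ∧ ∀ q ∈ M, ¬ Crossing (m, w) q

/-- A strongly stable noncrossing matching (for SMTI in the weak-stability sense:
a weak-SSNM): a noncrossing matching admitting no (weak) blocking pair at all. -/
def IsSSNM [Preorder Mty] [Preorder Wty] (I : SMTI Mty Wty) (M : Finset (Mty × Wty)) : Prop :=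
  I.IsMatching M ∧ Noncrossing M ∧ ∀ m w, ¬ I.Blocks M m w

/-- A weakly stable noncrossing matching: a noncrossing matching admitting
no noncrossing (weak) blocking pair. -/
def IsWSNM [Preorder Mty] [Preorder Wty] (I : SMTI Mty Wty) (M : Finset (Mty × Wty)) : Prop :=
  I.IsMatching M ∧ Noncrossing M ∧ ∀ m w, ¬ I.NCBlocks M m w

/-- The instance has strict preference lists (no ties), i.e. it is an SMI instance. -/
def NoTies (I : SMTI Mty Wty) : Prop :=
  (∀ m w w', (I.mpref m w).isSome → I.mpref m w = I.mpref m w' → w = w') ∧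
  (∀ w m m', (I.wpref w m).isSome → I.wpref w m = I.wpref w m' → m = m')

end SMTI

namespace SMTI

variable {Mty Wty : Type}

/-- `opt I`: the maximum cardinality of a WSNM of `I`. -/
noncomputable def opt [Preorder Mty] [Preorder Wty] (I : SMTI Mty Wty) : ℕ :=
  sSup {k | ∃ M, I.IsWSNM M ∧ M.card = k}

/-- `p` is the maximum pair of `M`:  it belongs to `M` and dominates every pair
of `M` in both coordinates. -/
def IsMaxPair [Preorder Mty] [Preorder Wty] (M : Finset (Mty × Wty)) (p : Mty × Wty) : Prop :=
  p ∈ M ∧ ∀ q ∈ M, q.1 ≤ p.1 ∧ q.2 ≤ p.2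

/-- `M` is a semi-WSNM with maximum pair `p`: a noncrossing matching whose maximum
pair is `p` and all of whose noncrossing blocking pairs lie (weakly) beyond `p` in
both coordinates. -/
def IsSemiWSNMWith [Preorder Mty] [Preorder Wty] (I : SMTI Mty Wty)
    (M : Finset (Mty × Wty)) (p : Mty × Wty) : Prop :=
  I.IsMatching M ∧ Noncrossing M ∧ IsMaxPair M p ∧
    ∀ m w, I.NCBlocks M m w → p.1 ≤ m ∧ p.2 ≤ w

/-- `M` is a semi-WSNM (with some maximum pair). -/
def IsSemiWSNM [Preorder Mty] [Preorder Wty] (I : SMTI Mty Wty)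
    (M : Finset (Mty × Wty)) : Prop :=
  ∃ p, I.IsSemiWSNMWith M p

/-- The padded instance: new man `m₀` and woman `w₀` on top, new man `m_{n+1}` and
woman `w_{n+1}` at the bottom; `m₀` and `w₀` list only each other, and so do
`m_{n+1}` and `w_{n+1}`; all other lists are as in the original instance
(original person `i`, `1 ≤ i ≤ n`, becomes index `i` of `Fin (n+2)`). -/
def padded {n : ℕ} (I : SMTI (Fin n) (Fin n)) : SMTI (Fin (n + 2)) (Fin (n + 2)) where
  mpref m w :=
    if hm : 0 < m.val ∧ m.val < n + 1 then
      if hw : 0 < w.val ∧ w.val < n + 1 then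
        I.mpref ⟨m.val - 1, by omega⟩ ⟨w.val - 1, by omega⟩
      else none
    else if (m.val = 0 ∧ w.val = 0) ∨ (m.val = n + 1 ∧ w.val = n + 1) then some 0
    else none
  wpref w m :=
    if hw : 0 < w.val ∧ w.val < n + 1 then
      if hm : 0 < m.val ∧ m.val < n + 1 then
        I.wpref ⟨w.val - 1, by omega⟩ ⟨m.val - 1, by omega⟩
      else none
    else if (m.val = 0 ∧ w.val = 0) ∨ (m.val = n + 1 ∧ w.val = n + 1) then some 0
    else none

/-- The embedding of a pair of the original instance into the padded instance. -/
def emb {n : ℕ} (p : Fin n × Fin n) : Fin (n + 2) × Fin (n + 2) :=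
  (⟨p.1.val + 1, by omega⟩, ⟨p.2.val + 1, by omega⟩)

/-- Pairs `p` and `q` (with `p.1 < q.1` and `p.2 < q.2`) are conflicting if the
matching `{p, q}` admits a blocking pair lying between them in both coordinates. -/
def Conflicting {nm nw : ℕ} (I : SMTI (Fin nm) (Fin nw)) (p q : Fin nm × Fin nw) : Prop :=
  ∃ s t, I.Blocks {p, q} s t ∧ p.1 ≤ s ∧ s ≤ q.1 ∧ p.2 ≤ t ∧ t ≤ q.2

/-- `X I i j`: the maximum size of a semi-WSNM of `I` with maximum pair `(m_i, w_j)`,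
or `⊥` (i.e. `−∞`) if none exists. -/
noncomputable def X {nm nw : ℕ} (I : SMTI (Fin nm) (Fin nw)) (i : Fin nm) (j : Fin nw) :
    WithBot ℕ :=
  if ∃ M, I.IsSemiWSNMWith M (i, j) then
    ((sSup {k | ∃ M, I.IsSemiWSNMWith M (i, j) ∧ M.card = k} : ℕ) : WithBot ℕ)
  else ⊥

end SMTI

-- ===== my additions =====
namespace SMTI

variable {Mty Wty : Type}

lemma crossing_comm [Preorder Mty] [Preorder Wty] {p q : Mty × Wty} :
    Crossing p q ↔ Crossing q p := or_comm

lemma rk_lt_top_iff {o : Option ℕ} : rk o < ⊤ ↔ o.isSome := by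
  cases o <;> simp [rk]

variable {nm nw : ℕ}

/-- the lexicographic potential: rank of each woman's partner (⊤ if single). -/
noncomputable def Wvec (I : SMTI (Fin nm) (Fin nw)) (M : Finset (Fin nm × Fin nw)) :
    Fin nw → ℕ∞ :=
  fun j => (M.filter (fun p => p.2 = j)).inf (fun p => rk (I.wpref j p.1))

/-- run invariant: every noncrossing blocking pair has its woman above the man's
partner and its man below the woman's partner. -/
def INVt (I : SMTI (Fin nm) (Fin nw)) (M : Finset (Fin nm × Fin nw)) : Prop :=
  ∀ a b, I.NCBlocks M a b →
    (∀ w', (a, w') ∈ M → b < w') ∧ (∀ m', (m', b) ∈ M → m' < a)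

lemma step_lemma (I : SMTI (Fin nm) (Fin nw)) (M : Finset (Fin nm × Fin nw))
    (hmat : I.IsMatching M) (hnc : Noncrossing M) (hinv : INVt I M)
    (hne : ∃ m w, I.NCBlocks M m w) :
    ∃ M', I.IsMatching M' ∧ Noncrossing M' ∧ INVt I M' ∧
      toLex (Wvec I M') < toLex (Wvec I M) := by
  classical
  obtain ⟨m₀, w₀, h₀⟩ := hne
  set B : Finset (Fin nm × Fin nw) :=
    Finset.univ.filter (fun p => I.NCBlocks M p.1 p.2) with hBdef
  have hB : (m₀, w₀) ∈ B := by simp [hBdef, h₀]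
  obtain ⟨p₁, hp₁, hmin1⟩ := B.exists_min_image Prod.fst ⟨_, hB⟩
  set s := p₁.1 with hs
  have hp₁' : p₁ ∈ B.filter (fun p => p.1 = s) := by simp [Finset.mem_filter, hp₁, hs]
  obtain ⟨p₂, hp₂, hmin2⟩ :=
    (B.filter (fun p => p.1 = s)).exists_min_image
      (fun p => rk (I.mpref s p.2)) ⟨p₁, hp₁'⟩
  set t := p₂.2 with ht
  have hp₂B : p₂ ∈ B ∧ p₂.1 = s := by simpa [Finset.mem_filter] using hp₂
  have hst : I.NCBlocks M s t := by
    have := hp₂B.1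
    rw [hBdef, Finset.mem_filter] at this
    rw [← hp₂B.2]; exact this.2
  have hmins : ∀ a b, I.NCBlocks M a b → s ≤ a := by
    intro a b hab
    have : (a, b) ∈ B := by simp [hBdef, hab]
    exact hmin1 _ this
  have hmint : ∀ b, I.NCBlocks M s b → rk (I.mpref s t) ≤ rk (I.mpref s b) := by
    intro b hb
    have : (s, b) ∈ B.filter (fun p => p.1 = s) := by
      simp [Finset.mem_filter, hBdef, hb]
    exact hmin2 _ this
  have fact1 : ∀ w', (s, w') ∈ M → t < w' := (hinv s t hst).1
  have fact2 : ∀ m', (m', t) ∈ M → m' < s := (hinv s t hst).2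
  obtain ⟨hb, hcr⟩ := hst
  obtain ⟨hacc, hnotM, hms, hws⟩ := hb
  set M' := insert (s, t) (M.filter (fun p => p.1 ≠ s ∧ p.2 ≠ t)) with hM'def
  have hmem : ∀ p, p ∈ M' ↔ p = (s, t) ∨ (p ∈ M ∧ p.1 ≠ s ∧ p.2 ≠ t) := by
    intro p; simp [hM'def, Finset.mem_insert, Finset.mem_filter]
  have hstM' : (s, t) ∈ M' := Finset.mem_insert_self _ _
  -- matching
  have hmat' : I.IsMatching M' := by
    constructor
    · intro p hp
      rcases (hmem p).1 hp with rfl | ⟨hpM, _⟩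
      · exact hacc
      · exact hmat.1 p hpM
    · intro p hp q hq hshare
      rcases (hmem p).1 hp with rfl | ⟨hpM, hp1, hp2⟩ <;>
        rcases (hmem q).1 hq with rfl | ⟨hqM, hq1, hq2⟩
      · rfl
      · rcases hshare with h | h
        · exact absurd h.symm hq1
        · exact absurd h.symm hq2
      · rcases hshare with h | h
        · exact absurd h hp1
        · exact absurd h hp2
      · exact hmat.2 p hpM q hqM hshare
  -- noncrossing
  have hnc' : Noncrossing M' := by
    intro p hp q hq
    rcases (hmem p).1 hp with rfl | ⟨hpM, _, _⟩ <;>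
      rcases (hmem q).1 hq with rfl | ⟨hqM, _, _⟩
    · simp [Crossing, lt_irrefl]
    · exact hcr q hqM
    · exact fun h => hcr p hpM (crossing_comm.1 h)
    · exact hnc p hpM q hqM
  refine ⟨M', hmat', hnc', ?_, ?_⟩
  · -- INV preservation
    intro a b hab
    obtain ⟨⟨hacc', hnotM', hms', hws'⟩, hcr'⟩ := hab
    by_cases has : a = s
    · subst has
      -- show b < t
      have hbt : b < t := by
        rcases lt_trichotomy b t with h | h | h
        · exact h
        · exact absurd (h ▸ hstM') hnotM'
        · -- t < b : contradiction with rank-minimality of t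
          exfalso
          have rk1 : rk (I.mpref s b) < rk (I.mpref s t) := hms' t hstM'
          have hsbM : (s, b) ∉ M := by
            intro hmem2
            exact absurd (hms b hmem2) (not_lt.2 rk1.le)
          have hblk : I.NCBlocks M s b := by
            refine ⟨⟨hacc', hsbM, ?_, ?_⟩, ?_⟩
            · intro w' hw'
              exact rk1.trans (hms w' hw')
            · intro m' hm'
              have hm's : m' ≠ s := by
                rintro rfl; exact hsbM hm'
              have : (m', b) ∈ M' := (hmem _).2 (Or.inr ⟨hm', hm's, fun hh => absurd hh (ne_of_gt h)⟩)
              exact hws' m' this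
            · intro q hq
              by_cases hq1 : q.1 = s
              · intro hcross
                rcases hcross with ⟨h1, _⟩ | ⟨h1, _⟩ <;> rw [hq1] at h1 <;> exact lt_irrefl _ h1
              · by_cases hq2 : q.2 = t
                · have hq' : (q.1, q.2) ∈ M := by simpa using hq
                  have hlt : q.1 < s := fact2 q.1 (hq2 ▸ hq')
                  intro hcross
                  rcases hcross with ⟨h1, _⟩ | ⟨_, h2⟩
                  · exact absurd h1 (not_lt.2 hlt.le)
                  · rw [hq2] at h2; exact absurd h2 (not_lt.2 h.le)
                · have : q ∈ M' := (hmem _).2 (Or.inr ⟨hq, hq1, hq2⟩)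
                  exact hcr' q this
          exact absurd (hmint b hblk) (not_le.2 rk1)
      constructor
      · intro w' hw'
        have : (s, w') = (s, t) := hmat'.2 _ hw' _ hstM' (Or.inl rfl)
        rw [Prod.mk.injEq] at this
        exact this.2 ▸ hbt
      · intro m' hm'
        have hncm : ¬ Crossing (m', b) (s, t) := hnc' _ hm' _ hstM'
        have hm's2 : m' ≠ s := by
          intro hEq
          have h2 : (m', b) = (s, t) := hmat'.2 _ hm' _ hstM' (Or.inl hEq)
          rw [Prod.mk.injEq] at h2
          exact absurd h2.2 (ne_of_lt hbt)
        rcases lt_or_gt_of_ne hm's2 with h | h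
        · exact h
        · exact absurd (Or.inr ⟨h, hbt⟩) hncm
    · -- a ≠ s
      by_cases hbt : b = t
      · subst hbt
        have hsa : s < a := by
          rcases lt_trichotomy a s with h | h | h
          · exfalso
            have hatM : (a, t) ∉ M := by
              intro hmem2
              exact absurd (hws a hmem2) (not_lt.2 (hws' s hstM').le)
            have hblk : I.NCBlocks M a t := by
              refine ⟨⟨hacc', hatM, ?_, ?_⟩, ?_⟩
              · intro w' hw'
                have hw't : w' ≠ t := by
                  intro hh; exact hatM (hh ▸ hw')
                exact hms' w' ((hmem _).2 (Or.inr ⟨hw', has, hw't⟩))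
              · intro m' hm'
                exact (hws' s hstM').trans (hws m' hm')
              · intro q hq
                obtain ⟨q1, q2⟩ := q
                by_cases hq2 : q2 = t
                · intro hcross
                  rcases hcross with ⟨_, h2⟩ | ⟨_, h2⟩ <;> rw [hq2] at h2 <;>
                    exact lt_irrefl _ h2
                · by_cases hq1 : q1 = s
                  · have hq' : (s, q2) ∈ M := hq1 ▸ hq
                    have htq2 : t < q2 := fact1 q2 hq'
                    intro hcross
                    rcases hcross with ⟨h1, h2⟩ | ⟨h1, h2⟩
                    · exact absurd h2 (not_lt.2 htq2.le)
                    · rw [hq1] at h1; exact absurd h1 (not_lt.2 h.le)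
                  · exact hcr' _ ((hmem _).2 (Or.inr ⟨hq, hq1, hq2⟩))
            exact absurd (hmins a t hblk) (not_le.2 h)
          · exact absurd h has
          · exact h
        constructor
        · intro w' hw'
          rcases (hmem _).1 hw' with heq | ⟨hwM, _, hw2⟩
          · rw [Prod.mk.injEq] at heq; exact absurd heq.1 has
          · have hncx : ¬ Crossing (a, w') (s, t) := hnc' _ hw' _ hstM'
            rcases lt_trichotomy t w' with h | h | h
            · exact h
            · exact absurd h.symm hw2
            · exact absurd (Or.inr ⟨hsa, h⟩) hncx
        · intro m' hm'
          have h2 : (m', t) = (s, t) := hmat'.2 _ hm' _ hstM' (Or.inr rfl)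
          rw [Prod.mk.injEq] at h2
          exact h2.1 ▸ hsa
      · -- b ≠ t
        have habM : (a, b) ∉ M := fun hmem2 =>
          hnotM' ((hmem _).2 (Or.inr ⟨hmem2, has, hbt⟩))
        by_cases hF1 : (a, t) ∈ M
        · have halt : a < s := fact2 a hF1
          have hblt : b < t := by
            have hncx : ¬ Crossing (a, b) (s, t) := hcr' _ hstM'
            rcases lt_trichotomy b t with h | h | h
            · exact h
            · exact absurd h hbt
            · exact absurd (Or.inl ⟨halt, h⟩) hncx
          constructor
          · intro w' hw'
            rcases (hmem _).1 hw' with heq | ⟨hwM, _, hw2⟩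
            · rw [Prod.mk.injEq] at heq; exact absurd heq.1 has
            · exfalso
              have h2 : (a, w') = (a, t) := hmat.2 _ hwM _ hF1 (Or.inl rfl)
              rw [Prod.mk.injEq] at h2
              exact hw2 h2.2
          · intro m' hm'
            rcases (hmem _).1 hm' with heq | ⟨hmM, _, _⟩
            · rw [Prod.mk.injEq] at heq; exact absurd heq.2 hbt
            · have hncx : ¬ Crossing (m', b) (a, t) := hnc _ hmM _ hF1
              rcases lt_trichotomy m' a with h | h | h
              · exact h
              · exfalso
                have h2 : (m', b) = (a, t) := hmat.2 _ hmM _ hF1 (Or.inl h)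
                rw [Prod.mk.injEq] at h2; exact hbt h2.2
              · exact absurd (Or.inr ⟨h, hblt⟩) hncx
        · by_cases hF2 : (s, b) ∈ M
          · have htlb : t < b := fact1 b hF2
            have hsa : s < a := by
              have hncx : ¬ Crossing (a, b) (s, t) := hcr' _ hstM'
              rcases lt_trichotomy a s with h | h | h
              · exact absurd (Or.inl ⟨h, htlb⟩) hncx
              · exact absurd h has
              · exact h
            constructor
            · intro w' hw'
              rcases (hmem _).1 hw' with heq | ⟨hwM, _, _⟩
              · rw [Prod.mk.injEq] at heq; exact absurd heq.1 has
              · have hncx : ¬ Crossing (a, w') (s, b) := hnc _ hwM _ hF2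
                rcases lt_trichotomy b w' with h | h | h
                · exact h
                · exfalso
                  have h2 : (a, w') = (s, b) := hmat.2 _ hwM _ hF2 (Or.inr h.symm)
                  rw [Prod.mk.injEq] at h2; exact has h2.1
                · exact absurd (Or.inr ⟨hsa, h⟩) hncx
            · intro m' hm'
              rcases (hmem _).1 hm' with heq | ⟨hmM, hm1, _⟩
              · rw [Prod.mk.injEq] at heq; exact absurd heq.2 hbt
              · exfalso
                have h2 : (m', b) = (s, b) := hmat.2 _ hmM _ hF2 (Or.inr rfl)
                rw [Prod.mk.injEq] at h2; exact hm1 h2.1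
          · by_cases hF3 : ∃ w1, (s, w1) ∈ M ∧ Crossing (a, b) (s, w1)
            · obtain ⟨w1, hw1M, hcross⟩ := hF3
              have htw1 : t < w1 := fact1 w1 hw1M
              rcases hcross with ⟨h1, h2⟩ | ⟨h1, h2⟩
              · exact absurd (Or.inl ⟨h1, htw1.trans h2⟩) (hcr' _ hstM')
              · constructor
                · intro w' hw'
                  rcases (hmem _).1 hw' with heq | ⟨hwM, _, _⟩
                  · rw [Prod.mk.injEq] at heq; exact absurd heq.1 has
                  · have hncx : ¬ Crossing (a, w') (s, w1) := hnc _ hwM _ hw1M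
                    rcases lt_trichotomy w1 w' with h | h | h
                    · exact h2.trans h
                    · exfalso
                      have h3 : (a, w') = (s, w1) := hmat.2 _ hwM _ hw1M (Or.inr h.symm)
                      rw [Prod.mk.injEq] at h3; exact has h3.1
                    · exact absurd (Or.inr ⟨h1, h⟩) hncx
                · intro m' hm'
                  rcases (hmem _).1 hm' with heq | ⟨hmM, hm1, _⟩
                  · rw [Prod.mk.injEq] at heq; exact absurd heq.2 hbt
                  · have hncx : ¬ Crossing (m', b) (s, w1) := hnc _ hmM _ hw1M
                    rcases lt_trichotomy m' s with h | h | h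
                    · exact h.trans h1
                    · exact absurd h hm1
                    · exact absurd (Or.inr ⟨h, h2⟩) hncx
            · by_cases hF4 : ∃ m2, (m2, t) ∈ M ∧ Crossing (a, b) (m2, t)
              · obtain ⟨m2, hm2M, hcross⟩ := hF4
                have hm2s : m2 < s := fact2 m2 hm2M
                rcases hcross with ⟨h1, h2⟩ | ⟨h1, h2⟩
                · exact absurd (Or.inl ⟨h1.trans hm2s, h2⟩) (hcr' _ hstM')
                · constructor
                  · intro w' hw'
                    rcases (hmem _).1 hw' with heq | ⟨hwM, _, _⟩
                    · rw [Prod.mk.injEq] at heq; exact absurd heq.1 has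
                    · have hncx : ¬ Crossing (a, w') (m2, t) := hnc _ hwM _ hm2M
                      rcases lt_trichotomy t w' with h | h | h
                      · exact h2.trans h
                      · exfalso
                        have h3 : (a, w') = (m2, t) := hmat.2 _ hwM _ hm2M (Or.inr h.symm)
                        rw [Prod.mk.injEq] at h3
                        exact absurd h3.1 (ne_of_gt h1)
                      · exact absurd (Or.inr ⟨h1, h⟩) hncx
                  · intro m' hm'
                    rcases (hmem _).1 hm' with heq | ⟨hmM, _, _⟩
                    · rw [Prod.mk.injEq] at heq; exact absurd heq.2 hbt
                    · have hncx : ¬ Crossing (m', b) (m2, t) := hnc _ hmM _ hm2M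
                      rcases lt_trichotomy m' m2 with h | h | h
                      · exact h.trans h1
                      · exfalso
                        have h3 : (m', b) = (m2, t) := hmat.2 _ hmM _ hm2M (Or.inl h)
                        rw [Prod.mk.injEq] at h3; exact hbt h3.2
                      · exact absurd (Or.inr ⟨h, h2⟩) hncx
              · have hblk : I.NCBlocks M a b := by
                  refine ⟨⟨hacc', habM, ?_, ?_⟩, ?_⟩
                  · intro w' hw'
                    have hw't : w' ≠ t := fun hh => hF1 (hh ▸ hw')
                    exact hms' w' ((hmem _).2 (Or.inr ⟨hw', has, hw't⟩))
                  · intro m' hm'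
                    have hm's : m' ≠ s := fun hh => hF2 (hh ▸ hm')
                    exact hws' m' ((hmem _).2 (Or.inr ⟨hm', hm's, hbt⟩))
                  · intro q hq
                    obtain ⟨q1, q2⟩ := q
                    by_cases hq1 : q1 = s
                    · intro hcross
                      exact hF3 ⟨q2, hq1 ▸ hq, hq1 ▸ hcross⟩
                    · by_cases hq2 : q2 = t
                      · intro hcross
                        exact hF4 ⟨q1, hq2 ▸ hq, hq2 ▸ hcross⟩
                      · exact hcr' _ ((hmem _).2 (Or.inr ⟨hq, hq1, hq2⟩))
                obtain ⟨c1, c2⟩ := hinv a b hblk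
                constructor
                · intro w' hw'
                  rcases (hmem _).1 hw' with heq | ⟨hwM, _, _⟩
                  · rw [Prod.mk.injEq] at heq; exact absurd heq.1 has
                  · exact c1 w' hwM
                · intro m' hm'
                  rcases (hmem _).1 hm' with heq | ⟨hmM, _, _⟩
                  · rw [Prod.mk.injEq] at heq; exact absurd heq.2 hbt
                  · exact c2 m' hmM
  · -- lexicographic decrease
    have key2 : Wvec I M' t < Wvec I M t := by
      have hfilt : M'.filter (fun p => p.2 = t) = {(s, t)} := by
        apply Finset.ext
        intro p
        simp only [Finset.mem_filter, Finset.mem_singleton]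
        constructor
        · rintro ⟨hp, hp2⟩
          rcases (hmem p).1 hp with rfl | ⟨_, _, hne2⟩
          · rfl
          · exact absurd hp2 hne2
        · rintro rfl
          exact ⟨hstM', rfl⟩
      have hlt_top : rk (I.wpref t s) < ⊤ := rk_lt_top_iff.2 hacc.2
      rw [Wvec, hfilt, Finset.inf_singleton]
      by_cases hne2 : (M.filter (fun p => p.2 = t)).Nonempty
      · rw [Wvec, Finset.lt_inf_iff hlt_top]
        intro p hp
        rw [Finset.mem_filter] at hp
        have : (p.1, t) ∈ M := by rw [← hp.2]; exact hp.1
        exact hws p.1 this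
      · rw [Wvec, Finset.not_nonempty_iff_eq_empty.1 hne2, Finset.inf_empty]
        exact hlt_top
    have key1 : ∀ j, j < t → Wvec I M' j = Wvec I M j := by
      intro j hj
      have : M'.filter (fun p => p.2 = j) = M.filter (fun p => p.2 = j) := by
        apply Finset.ext
        intro p
        simp only [Finset.mem_filter]
        constructor
        · rintro ⟨hp, hp2⟩
          rcases (hmem p).1 hp with rfl | ⟨hpM, _, _⟩
          · exact absurd hp2 (by simpa using (ne_of_gt hj))
          · exact ⟨hpM, hp2⟩
        · rintro ⟨hp, hp2⟩
          refine ⟨(hmem p).2 (Or.inr ⟨hp, ?_, ?_⟩), hp2⟩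
          · intro hp1
            have : (s, j) ∈ M := by rw [← hp1, ← hp2]; exact hp
            exact absurd (fact1 j this) (not_lt.2 hj.le)
          · intro hpt
            rw [hpt] at hp2
            exact (ne_of_gt hj) hp2
      rw [Wvec, Wvec, this]
    exact ⟨t, key1, key2⟩

theorem exists_wsnm (I : SMTI (Fin nm) (Fin nw)) : ∃ M, I.IsWSNM M := by
  classical
  suffices h : ∀ v : Lex (Fin nw → ℕ∞), ∀ M : Finset (Fin nm × Fin nw),
      toLex (Wvec I M) = v → I.IsMatching M → Noncrossing M → INVt I M →
      ∃ W, I.IsWSNM W by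
    refine h (toLex (Wvec I (∅ : Finset (Fin nm × Fin nw)))) ∅ rfl ?_ ?_ ?_
    · exact ⟨fun p hp => absurd hp (Finset.notMem_empty p),
        fun p hp q hq _ => absurd hp (Finset.notMem_empty p)⟩
    · intro p hp; exact absurd hp (Finset.notMem_empty p)
    · intro a b _
      exact ⟨fun w' hw' => absurd hw' (Finset.notMem_empty _),
        fun m' hm' => absurd hm' (Finset.notMem_empty _)⟩
  intro v
  induction v using WellFoundedLT.induction with
  | _ v IH =>
    intro M hv hm hn hi
    by_cases hbl : ∃ m w, I.NCBlocks M m w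
    · obtain ⟨M', h1, h2, h3, h4⟩ := step_lemma I M hm hn hi hbl
      exact IH _ (hv ▸ h4) M' rfl h1 h2 h3
    · exact ⟨M, hm, hn, fun m w h => hbl ⟨m, w, h⟩⟩


end SMTI


namespace SMTI

variable {n : ℕ}

lemma padded_mpref_in (I' : SMTI (Fin n) (Fin n)) {m w : Fin (n + 2)}
    (hm : 0 < m.val ∧ m.val < n + 1) (hw : 0 < w.val ∧ w.val < n + 1) :
    (padded I').mpref m w = I'.mpref ⟨m.val - 1, by omega⟩ ⟨w.val - 1, by omega⟩ := by
  simp only [padded]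
  rw [dif_pos hm, dif_pos hw]

lemma padded_wpref_in (I' : SMTI (Fin n) (Fin n)) {m w : Fin (n + 2)}
    (hm : 0 < m.val ∧ m.val < n + 1) (hw : 0 < w.val ∧ w.val < n + 1) :
    (padded I').wpref w m = I'.wpref ⟨w.val - 1, by omega⟩ ⟨m.val - 1, by omega⟩ := by
  simp only [padded]
  rw [dif_pos hw, dif_pos hm]

lemma padded_mpref_out (I' : SMTI (Fin n) (Fin n)) {m w : Fin (n + 2)}
    (hm : ¬(0 < m.val ∧ m.val < n + 1)) :
    (padded I').mpref m w =
      if (m.val = 0 ∧ w.val = 0) ∨ (m.val = n + 1 ∧ w.val = n + 1) then some 0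
      else none := by
  simp only [padded]
  rw [dif_neg hm]

lemma padded_mpref_out_w (I' : SMTI (Fin n) (Fin n)) {m w : Fin (n + 2)}
    (hm : 0 < m.val ∧ m.val < n + 1) (hw : ¬(0 < w.val ∧ w.val < n + 1)) :
    (padded I').mpref m w = none := by
  simp only [padded]
  rw [dif_pos hm, dif_neg hw]

lemma padded_wpref_out (I' : SMTI (Fin n) (Fin n)) {m w : Fin (n + 2)}
    (hw : ¬(0 < w.val ∧ w.val < n + 1)) :
    (padded I').wpref w m =
      if (m.val = 0 ∧ w.val = 0) ∨ (m.val = n + 1 ∧ w.val = n + 1) then some 0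
      else none := by
  simp only [padded]
  rw [dif_neg hw]

lemma padded_wpref_out_m (I' : SMTI (Fin n) (Fin n)) {m w : Fin (n + 2)}
    (hw : 0 < w.val ∧ w.val < n + 1) (hm : ¬(0 < m.val ∧ m.val < n + 1)) :
    (padded I').wpref w m = none := by
  simp only [padded]
  rw [dif_pos hw, dif_neg hm]

lemma padded_acc_iff (I' : SMTI (Fin n) (Fin n)) (m w : Fin (n + 2)) :
    (padded I').Acc m w ↔
      (m = 0 ∧ w = 0) ∨ (m = Fin.last (n + 1) ∧ w = Fin.last (n + 1)) ∨
      ∃ (hm : 0 < m.val ∧ m.val < n + 1) (hw : 0 < w.val ∧ w.val < n + 1),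
        I'.Acc ⟨m.val - 1, by omega⟩ ⟨w.val - 1, by omega⟩ := by
  constructor
  · rintro ⟨h1, h2⟩
    by_cases hm : 0 < m.val ∧ m.val < n + 1
    · by_cases hw : 0 < w.val ∧ w.val < n + 1
      · refine Or.inr (Or.inr ⟨hm, hw, ?_, ?_⟩)
        · rw [padded_mpref_in I' hm hw] at h1; exact h1
        · rw [padded_wpref_in I' hm hw] at h2; exact h2
      · rw [padded_mpref_out_w I' hm hw] at h1; simp at h1
    · rw [padded_mpref_out I' hm] at h1
      by_cases hc : (m.val = 0 ∧ w.val = 0) ∨ (m.val = n + 1 ∧ w.val = n + 1)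
      · rcases hc with ⟨ha, hb⟩ | ⟨ha, hb⟩
        · exact Or.inl ⟨Fin.ext ha, Fin.ext hb⟩
        · exact Or.inr (Or.inl ⟨Fin.ext ha, Fin.ext hb⟩)
      · rw [if_neg hc] at h1; simp at h1
  · rintro (⟨rfl, rfl⟩ | ⟨rfl, rfl⟩ | ⟨hm, hw, ha1, ha2⟩)
    · constructor
      · rw [padded_mpref_out I' (by simp)]
        simp
      · rw [padded_wpref_out I' (by simp)]
        simp
    · constructor
      · rw [padded_mpref_out I' (by simp)]
        simp
      · rw [padded_wpref_out I' (by simp)]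
        simp
    · constructor
      · rw [padded_mpref_in I' hm hw]; exact ha1
      · rw [padded_wpref_in I' hm hw]; exact ha2

lemma padded_acc_zero (I' : SMTI (Fin n) (Fin n)) :
    (padded I').Acc 0 0 := (padded_acc_iff I' 0 0).2 (Or.inl ⟨rfl, rfl⟩)

lemma padded_acc_last (I' : SMTI (Fin n) (Fin n)) :
    (padded I').Acc (Fin.last (n + 1)) (Fin.last (n + 1)) :=
  (padded_acc_iff I' _ _).2 (Or.inr (Or.inl ⟨rfl, rfl⟩))

lemma not_crossing_zz (q : Fin (n + 2) × Fin (n + 2)) :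
    ¬ Crossing ((0 : Fin (n + 2)), (0 : Fin (n + 2))) q := by
  rintro (⟨_, h2⟩ | ⟨h1, _⟩)
  · exact absurd h2 (Fin.not_lt_zero _)
  · exact absurd h1 (Fin.not_lt_zero _)

lemma not_crossing_ll (q : Fin (n + 2) × Fin (n + 2)) :
    ¬ Crossing (Fin.last (n + 1), Fin.last (n + 1)) q := by
  rintro (⟨h1, _⟩ | ⟨_, h2⟩)
  · exact absurd h1 (not_lt.2 (Fin.le_last _))
  · exact absurd h2 (not_lt.2 (Fin.le_last _))

lemma emb_fst_val (p : Fin n × Fin n) : (emb p).1.val = p.1.val + 1 := rfl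

lemma emb_snd_val (p : Fin n × Fin n) : (emb p).2.val = p.2.val + 1 := rfl

lemma emb_injective : Function.Injective (emb (n := n)) := by
  intro p q h
  simp only [emb, Prod.mk.injEq, Fin.mk.injEq] at h
  exact Prod.ext (Fin.ext (by omega)) (Fin.ext (by omega))

lemma crossing_emb_iff (p q : Fin n × Fin n) :
    Crossing (emb p) (emb q) ↔ Crossing p q := by
  simp only [Crossing, emb, Fin.mk_lt_mk, Fin.lt_def]
  omega

lemma emb_ne_zz (p : Fin n × Fin n) :
    emb p ≠ ((0 : Fin (n + 2)), (0 : Fin (n + 2))) := by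
  intro h
  have := congrArg (fun r => r.1.val) h
  simp [emb] at this

lemma emb_ne_ll (p : Fin n × Fin n) :
    emb p ≠ (Fin.last (n + 1), Fin.last (n + 1)) := by
  intro h
  have := congrArg (fun r => r.1.val) h
  simp only [emb, Fin.last] at this
  have h2 := p.1.isLt
  omega

lemma zz_ne_ll : ((0 : Fin (n + 2)), (0 : Fin (n + 2))) ≠ (Fin.last (n + 1), Fin.last (n + 1)) := by
  intro h
  have := congrArg (fun r => r.1.val) h
  simp [Fin.last] at this

end SMTI


namespace SMTI

variable {n : ℕ}

lemma fin_zero_ne_last : (0 : Fin (n + 2)) ≠ Fin.last (n + 1) := by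
  intro h
  have := congrArg Fin.val h
  simp [Fin.last] at this

lemma padded_mpref_emb' (I' : SMTI (Fin n) (Fin n)) (i j : Fin n) {m w : Fin (n + 2)}
    (hm : m.val = i.val + 1) (hw : w.val = j.val + 1) :
    (padded I').mpref m w = I'.mpref i j := by
  have h1 : 0 < m.val ∧ m.val < n + 1 := ⟨by omega, by have := i.isLt; omega⟩
  have h2 : 0 < w.val ∧ w.val < n + 1 := ⟨by omega, by have := j.isLt; omega⟩
  have e1 : (⟨m.val - 1, by omega⟩ : Fin n) = i := Fin.ext (by simp [hm])
  have e2 : (⟨w.val - 1, by omega⟩ : Fin n) = j := Fin.ext (by simp [hw])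
  rw [padded_mpref_in I' h1 h2, e1, e2]

lemma padded_wpref_emb' (I' : SMTI (Fin n) (Fin n)) (i j : Fin n) {m w : Fin (n + 2)}
    (hm : m.val = i.val + 1) (hw : w.val = j.val + 1) :
    (padded I').wpref w m = I'.wpref j i := by
  have h1 : 0 < m.val ∧ m.val < n + 1 := ⟨by omega, by have := i.isLt; omega⟩
  have h2 : 0 < w.val ∧ w.val < n + 1 := ⟨by omega, by have := j.isLt; omega⟩
  have e1 : (⟨m.val - 1, by omega⟩ : Fin n) = i := Fin.ext (by simp [hm])
  have e2 : (⟨w.val - 1, by omega⟩ : Fin n) = j := Fin.ext (by simp [hw])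
  rw [padded_wpref_in I' h1 h2, e1, e2]

lemma padded_acc_emb (I' : SMTI (Fin n) (Fin n)) (i j : Fin n) {m w : Fin (n + 2)}
    (hm : m.val = i.val + 1) (hw : w.val = j.val + 1) :
    (padded I').Acc m w ↔ I'.Acc i j := by
  unfold Acc
  rw [padded_mpref_emb' I' i j hm hw, padded_wpref_emb' I' i j hm hw]

lemma padded_wsnm_mem_zz (I' : SMTI (Fin n) (Fin n)) {M : Finset (Fin (n + 2) × Fin (n + 2))}
    (hM : (padded I').IsWSNM M) : ((0 : Fin (n + 2)), (0 : Fin (n + 2))) ∈ M := by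
  by_contra h0
  refine hM.2.2 0 0 ⟨⟨padded_acc_zero I', h0, ?_, ?_⟩, fun q _ => not_crossing_zz q⟩
  · intro w' hw'
    exfalso
    have hacc := hM.1.1 _ hw'
    rcases (padded_acc_iff I' 0 w').1 hacc with ⟨_, rfl⟩ | ⟨h1, _⟩ | ⟨hm, _, _⟩
    · exact h0 hw'
    · exact fin_zero_ne_last h1
    · simp at hm
  · intro m' hm'
    exfalso
    have hacc := hM.1.1 _ hm'
    rcases (padded_acc_iff I' m' 0).1 hacc with ⟨rfl, _⟩ | ⟨_, h2⟩ | ⟨_, hw, _⟩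
    · exact h0 hm'
    · exact fin_zero_ne_last h2
    · simp at hw

lemma padded_wsnm_mem_ll (I' : SMTI (Fin n) (Fin n)) {M : Finset (Fin (n + 2) × Fin (n + 2))}
    (hM : (padded I').IsWSNM M) : (Fin.last (n + 1), Fin.last (n + 1)) ∈ M := by
  by_contra h0
  refine hM.2.2 (Fin.last (n + 1)) (Fin.last (n + 1))
    ⟨⟨padded_acc_last I', h0, ?_, ?_⟩, fun q _ => not_crossing_ll q⟩
  · intro w' hw'
    exfalso
    have hacc := hM.1.1 _ hw'
    rcases (padded_acc_iff I' _ w').1 hacc with ⟨h1, _⟩ | ⟨_, rfl⟩ | ⟨hm, _, _⟩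
    · exact fin_zero_ne_last h1.symm
    · exact h0 hw'
    · have := hm.2; simp [Fin.last] at this
  · intro m' hm'
    exfalso
    have hacc := hM.1.1 _ hm'
    rcases (padded_acc_iff I' m' _).1 hacc with ⟨_, h2⟩ | ⟨rfl, _⟩ | ⟨_, hw, _⟩
    · exact fin_zero_ne_last h2.symm
    · exact h0 hm'
    · have := hw.2; simp [Fin.last] at this

end SMTI


namespace SMTI

variable {n : ℕ}

lemma wsnm_iff_padded (I' : SMTI (Fin n) (Fin n)) (M' : Finset (Fin n × Fin n)) :
    I'.IsWSNM M' ↔ (padded I').IsWSNM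
      (insert ((0 : Fin (n + 2)), (0 : Fin (n + 2)))
        (insert (Fin.last (n + 1), Fin.last (n + 1)) (M'.image emb))) := by
  classical
  have hmemB : ∀ p, p ∈ insert ((0 : Fin (n + 2)), (0 : Fin (n + 2)))
      (insert (Fin.last (n + 1), Fin.last (n + 1)) (M'.image emb)) ↔
      p = ((0 : Fin (n + 2)), (0 : Fin (n + 2))) ∨
      p = (Fin.last (n + 1), Fin.last (n + 1)) ∨ ∃ q ∈ M', emb q = p := by
    intro p; simp [Finset.mem_insert, Finset.mem_image]
  constructor
  · intro hW
    refine ⟨⟨?_, ?_⟩, ?_, ?_⟩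
    · intro p hp
      rcases (hmemB p).1 hp with rfl | rfl | ⟨q, hq, rfl⟩
      · exact padded_acc_zero I'
      · exact padded_acc_last I'
      · exact (padded_acc_emb I' q.1 q.2 rfl rfl).2 (hW.1.1 q hq)
    · intro p hp q hq hshare
      rcases (hmemB p).1 hp with rfl | rfl | ⟨q1, hq1, rfl⟩ <;>
        rcases (hmemB q).1 hq with rfl | rfl | ⟨q2, hq2, rfl⟩
      · rfl
      · exfalso
        rcases hshare with h | h <;> exact fin_zero_ne_last h
      · exfalso
        rcases hshare with h | h <;>
          exact absurd (congrArg Fin.val h) (by simp [emb])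
      · exfalso
        rcases hshare with h | h <;> exact fin_zero_ne_last h.symm
      · rfl
      · exfalso
        have hlt1 := q2.1.isLt
        have hlt2 := q2.2.isLt
        rcases hshare with h | h <;>
          · have := congrArg Fin.val h
            simp only [emb, Fin.last] at this
            omega
      · exfalso
        rcases hshare with h | h <;>
          exact absurd (congrArg Fin.val h) (by simp [emb])
      · exfalso
        have hlt1 := q1.1.isLt
        have hlt2 := q1.2.isLt
        rcases hshare with h | h <;>
          · have := congrArg Fin.val h
            simp only [emb, Fin.last] at this
            omega
      · have : q1 = q2 := by
          apply hW.1.2 q1 hq1 q2 hq2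
          rcases hshare with h | h
          · exact Or.inl (Fin.ext (by simpa [emb] using congrArg Fin.val h))
          · exact Or.inr (Fin.ext (by simpa [emb] using congrArg Fin.val h))
        rw [this]
    · intro p hp q hq
      rcases (hmemB p).1 hp with rfl | rfl | ⟨q1, hq1, rfl⟩
      · exact not_crossing_zz q
      · exact not_crossing_ll q
      · rcases (hmemB q).1 hq with rfl | rfl | ⟨q2, hq2, rfl⟩
        · exact fun hc => not_crossing_zz _ (crossing_comm.1 hc)
        · exact fun hc => not_crossing_ll _ (crossing_comm.1 hc)
        · exact fun hc => hW.2.1 q1 hq1 q2 hq2 ((crossing_emb_iff q1 q2).1 hc)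
    · intro m w hblk
      obtain ⟨⟨hacc, hnm, hms, hws⟩, hnc⟩ := hblk
      rcases (padded_acc_iff I' m w).1 hacc with ⟨rfl, rfl⟩ | ⟨rfl, rfl⟩ | ⟨hm, hw, hacc'⟩
      · exact hnm ((hmemB _).2 (Or.inl rfl))
      · exact hnm ((hmemB _).2 (Or.inr (Or.inl rfl)))
      · set i : Fin n := ⟨m.val - 1, by omega⟩ with hi
        set j : Fin n := ⟨w.val - 1, by omega⟩ with hj
        have hmi : m.val = i.val + 1 := by simp [hi]; omega
        have hwj : w.val = j.val + 1 := by simp [hj]; omega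
        have hmw : (m, w) = emb (i, j) :=
          Prod.ext (Fin.ext (hmi.trans (emb_fst_val (i, j)).symm))
            (Fin.ext (hwj.trans (emb_snd_val (i, j)).symm))
        refine hW.2.2 i j ⟨⟨hacc', ?_, ?_, ?_⟩, ?_⟩
        · intro hin
          exact hnm ((hmemB _).2 (Or.inr (Or.inr ⟨(i, j), hin, hmw.symm⟩)))
        · intro j' hj'
          have hmem2 : (m, (emb (i, j')).2) ∈ _ := (hmemB _).2
            (Or.inr (Or.inr ⟨(i, j'), hj',
              Prod.ext (Fin.ext ((emb_fst_val (i, j')).trans hmi.symm)) rfl⟩))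
          have hlt := hms (emb (i, j')).2 hmem2
          rw [padded_mpref_emb' I' i j hmi hwj, padded_mpref_emb' I' i j' hmi rfl] at hlt
          exact hlt
        · intro i' hi'
          have hmem2 : ((emb (i', j)).1, w) ∈ _ := (hmemB _).2
            (Or.inr (Or.inr ⟨(i', j), hi',
              Prod.ext rfl (Fin.ext ((emb_snd_val (i', j)).trans hwj.symm))⟩))
          have hlt := hws (emb (i', j)).1 hmem2
          rw [padded_wpref_emb' I' i j hmi hwj, padded_wpref_emb' I' i' j rfl hwj] at hlt
          exact hlt
        · intro q' hq'
          intro hc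
          have h2 := hnc (emb q') ((hmemB _).2 (Or.inr (Or.inr ⟨q', hq', rfl⟩)))
          rw [hmw] at h2
          exact h2 ((crossing_emb_iff _ _).2 hc)
  · intro hW
    refine ⟨⟨?_, ?_⟩, ?_, ?_⟩
    · intro p hp
      exact (padded_acc_emb I' p.1 p.2 rfl rfl).1
        (hW.1.1 (emb p) ((hmemB _).2 (Or.inr (Or.inr ⟨p, hp, rfl⟩))))
    · intro p hp q hq hshare
      apply emb_injective
      apply hW.1.2 (emb p) ((hmemB _).2 (Or.inr (Or.inr ⟨p, hp, rfl⟩)))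
        (emb q) ((hmemB _).2 (Or.inr (Or.inr ⟨q, hq, rfl⟩)))
      rcases hshare with h | h
      · exact Or.inl (Fin.ext (by simp [emb, h]))
      · exact Or.inr (Fin.ext (by simp [emb, h]))
    · intro p hp q hq hc
      exact hW.2.1 (emb p) ((hmemB _).2 (Or.inr (Or.inr ⟨p, hp, rfl⟩)))
        (emb q) ((hmemB _).2 (Or.inr (Or.inr ⟨q, hq, rfl⟩)))
        ((crossing_emb_iff p q).2 hc)
    · intro i j hblk
      obtain ⟨⟨hacc, hnm, hms, hws⟩, hnc⟩ := hblk
      refine hW.2.2 (emb (i, j)).1 (emb (i, j)).2 ⟨⟨?_, ?_, ?_, ?_⟩, ?_⟩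
      · exact (padded_acc_emb I' i j rfl rfl).2 hacc
      · intro hin
        rcases (hmemB _).1 hin with h | h | ⟨q, hq, hqe⟩
        · exact emb_ne_zz (i, j) h
        · exact emb_ne_ll (i, j) h
        · exact hnm (emb_injective hqe ▸ hq)
      · intro w' hw'
        rcases (hmemB _).1 hw' with h | h | ⟨q, hq, hqe⟩
        · exact absurd (congrArg (fun r => r.1.val) h) (by simp [emb])
        · exact absurd (congrArg (fun r => r.1.val) h)
            (by have := i.isLt; simp only [emb, Fin.last]; omega)
        · have h1 : q.1 = i := by
            have h2 := congrArg (fun r => r.1.val) hqe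
            simp only [emb] at h2
            exact Fin.ext (by omega)
          have h2 : w' = (emb q).2 := (congrArg Prod.snd hqe).symm
          subst h2
          have hq' : (i, q.2) ∈ M' := by rw [← h1]; simpa using hq
          have hlt := hms q.2 hq'
          rw [padded_mpref_emb' I' i j rfl rfl, padded_mpref_emb' I' i q.2 rfl rfl]
          exact hlt
      · intro m' hm'
        rcases (hmemB _).1 hm' with h | h | ⟨q, hq, hqe⟩
        · exact absurd (congrArg (fun r => r.2.val) h) (by simp [emb])
        · exact absurd (congrArg (fun r => r.2.val) h)
            (by have := j.isLt; simp only [emb, Fin.last]; omega)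
        · have h1 : q.2 = j := by
            have h2 := congrArg (fun r => r.2.val) hqe
            simp only [emb] at h2
            exact Fin.ext (by omega)
          have h2 : m' = (emb q).1 := (congrArg Prod.fst hqe).symm
          subst h2
          have hq' : (q.1, j) ∈ M' := by rw [← h1]; simpa using hq
          have hlt := hws q.1 hq'
          rw [padded_wpref_emb' I' i j rfl rfl, padded_wpref_emb' I' q.1 j rfl rfl]
          exact hlt
      · intro q hq
        rcases (hmemB q).1 hq with rfl | rfl | ⟨q', hq', rfl⟩
        · exact fun hc => not_crossing_zz _ (crossing_comm.1 hc)
        · exact fun hc => not_crossing_ll _ (crossing_comm.1 hc)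
        · exact fun hc => hnc q' hq' ((crossing_emb_iff (i, j) q').1 hc)

end SMTI


namespace SMTI

variable {n : ℕ}

lemma ll_notMem_image (M' : Finset (Fin n × Fin n)) :
    (Fin.last (n + 1), Fin.last (n + 1)) ∉ M'.image emb := by
  intro h
  rw [Finset.mem_image] at h
  obtain ⟨q, _, he⟩ := h
  exact emb_ne_ll q he

lemma zz_notMem_insert (M' : Finset (Fin n × Fin n)) :
    ((0 : Fin (n + 2)), (0 : Fin (n + 2))) ∉
      insert (Fin.last (n + 1), Fin.last (n + 1)) (M'.image emb) := by
  intro h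
  rcases Finset.mem_insert.1 h with h | h
  · exact zz_ne_ll h
  · rw [Finset.mem_image] at h
    obtain ⟨q, _, he⟩ := h
    exact emb_ne_zz q he

lemma card_big (M' : Finset (Fin n × Fin n)) :
    (insert ((0 : Fin (n + 2)), (0 : Fin (n + 2)))
      (insert (Fin.last (n + 1), Fin.last (n + 1)) (M'.image emb))).card
      = M'.card + 2 := by
  rw [Finset.card_insert_of_notMem (zz_notMem_insert M'),
    Finset.card_insert_of_notMem (ll_notMem_image M'),
    Finset.card_image_of_injective _ emb_injective]

lemma padded_opt (I' : SMTI (Fin n) (Fin n)) : (padded I').opt = I'.opt + 2 := by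
  classical
  have hbdd' : BddAbove {k | ∃ M, I'.IsWSNM M ∧ M.card = k} := by
    refine ⟨(Finset.univ : Finset (Fin n × Fin n)).card, ?_⟩
    rintro k ⟨M, _, rfl⟩
    exact Finset.card_le_univ M
  have hbddP : BddAbove {k | ∃ M, (padded I').IsWSNM M ∧ M.card = k} := by
    refine ⟨(Finset.univ : Finset (Fin (n + 2) × Fin (n + 2))).card, ?_⟩
    rintro k ⟨M, _, rfl⟩
    exact Finset.card_le_univ M
  obtain ⟨M₀, hM₀⟩ := exists_wsnm I'
  have hne' : {k | ∃ M, I'.IsWSNM M ∧ M.card = k}.Nonempty := ⟨M₀.card, M₀, hM₀, rfl⟩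
  have hopt' : I'.opt = sSup {k | ∃ M, I'.IsWSNM M ∧ M.card = k} := rfl
  have hoptP : (padded I').opt = sSup {k | ∃ M, (padded I').IsWSNM M ∧ M.card = k} := rfl
  have hKmem : I'.opt ∈ {k | ∃ M, I'.IsWSNM M ∧ M.card = k} := by
    rw [hopt']; exact Nat.sSup_mem hne' hbdd'
  obtain ⟨MK, hMK, hcard⟩ := hKmem
  have hup : (padded I').IsWSNM
      (insert ((0 : Fin (n + 2)), (0 : Fin (n + 2)))
        (insert (Fin.last (n + 1), Fin.last (n + 1)) (MK.image emb))) :=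
    (wsnm_iff_padded I' MK).1 hMK
  have h1 : I'.opt + 2 ≤ (padded I').opt := by
    rw [hoptP]
    apply le_csSup hbddP
    exact ⟨_, hup, by rw [card_big, hcard]⟩
  have h2 : (padded I').opt ≤ I'.opt + 2 := by
    rw [hoptP]
    have hneP : {k | ∃ M, (padded I').IsWSNM M ∧ M.card = k}.Nonempty :=
      ⟨_, ⟨_, hup, rfl⟩⟩
    apply csSup_le hneP
    rintro k ⟨M, hM, rfl⟩
    set M'' := Finset.univ.filter (fun q : Fin n × Fin n => emb q ∈ M) with hM''
    have hMeq : insert ((0 : Fin (n + 2)), (0 : Fin (n + 2)))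
        (insert (Fin.last (n + 1), Fin.last (n + 1)) (M''.image emb)) = M := by
      apply Finset.ext
      intro p
      simp only [Finset.mem_insert, Finset.mem_image]
      constructor
      · rintro (rfl | rfl | ⟨q, hq, rfl⟩)
        · exact padded_wsnm_mem_zz I' hM
        · exact padded_wsnm_mem_ll I' hM
        · rw [hM'', Finset.mem_filter] at hq
          exact hq.2
      · intro hp
        have hacc := hM.1.1 p hp
        rcases (padded_acc_iff I' p.1 p.2).1 hacc with ⟨h1, h2⟩ | ⟨h1, h2⟩ | ⟨hm, hw, _⟩
        · exact Or.inl (Prod.ext h1 h2)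
        · exact Or.inr (Or.inl (Prod.ext h1 h2))
        · refine Or.inr (Or.inr ⟨(⟨p.1.val - 1, by omega⟩, ⟨p.2.val - 1, by omega⟩), ?_, ?_⟩)
          · rw [hM'', Finset.mem_filter]
            refine ⟨Finset.mem_univ _, ?_⟩
            have he : emb ((⟨p.1.val - 1, by omega⟩ : Fin n), (⟨p.2.val - 1, by omega⟩ : Fin n)) = p := by
              refine Prod.ext (Fin.ext ?_) (Fin.ext ?_)
              · rw [emb_fst_val]; simp; omega
              · rw [emb_snd_val]; simp; omega
            rw [he]; exact hp
          · refine Prod.ext (Fin.ext ?_) (Fin.ext ?_)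
            · rw [emb_fst_val]; simp; omega
            · rw [emb_snd_val]; simp; omega
    have hW'' : I'.IsWSNM M'' := (wsnm_iff_padded I' M'').2 (by rw [hMeq]; exact hM)
    have hcd : M.card = M''.card + 2 := by rw [← hMeq, card_big]
    have hle : M''.card ≤ I'.opt := by
      rw [hopt']
      exact le_csSup hbdd' ⟨M'', hW'', rfl⟩
    omega
  exact le_antisymm h2 h1

end SMTI

/-- padding an SMI instance `I'` to `I`:
(i) every WSNM of `I` contains `(m₀, w₀)` and `(m_{n+1}, w_{n+1})`;
(ii) `M'` is a WSNM of `I'` iff `M' ∪ {(m₀, w₀), (m_{n+1}, w_{n+1})}` is a WSNM of `I`;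
(iii) `opt I = opt I' + 2`. -/
theorem stmt9 {n : ℕ} (I' : SMTI (Fin n) (Fin n)) (hI' : I'.NoTies) :
    (∀ M, (SMTI.padded I').IsWSNM M →
      ((0 : Fin (n + 2)), (0 : Fin (n + 2))) ∈ M ∧ (Fin.last (n + 1), Fin.last (n + 1)) ∈ M) ∧
    (∀ M' : Finset (Fin n × Fin n),
      I'.IsWSNM M' ↔
        (SMTI.padded I').IsWSNM
          (insert ((0 : Fin (n + 2)), (0 : Fin (n + 2)))
            (insert (Fin.last (n + 1), Fin.last (n + 1)) (M'.image SMTI.emb)))) ∧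
    (SMTI.padded I').opt = I'.opt + 2 := by
  refine ⟨?_, ?_, SMTI.padded_opt I'⟩
  · intro M hM
    exact ⟨SMTI.padded_wsnm_mem_zz I' hM, SMTI.padded_wsnm_mem_ll I' hM⟩
  · intro M'
    exact SMTI.wsnm_iff_padded I' M'
end

section
/- Let I be the padded instance of an SMI instance I'. Then every semi-WSNM of I contains the pair (m_0, w_0). -/
open scoped Classical

/-- every semi-WSNM of the padded instance contains `(m₀, w₀)`. -/
theorem stmt10 {n : ℕ} (I' : SMTI (Fin n) (Fin n)) (hI' : I'.NoTies)
    (M : Finset (Fin (n + 2) × Fin (n + 2))) (h : (SMTI.padded I').IsSemiWSNM M) :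
    ((0 : Fin (n + 2)), (0 : Fin (n + 2))) ∈ M := by
  obtain ⟨p, hmatch, hnc, hmax, hsemi⟩ := h
  by_contra h0
  have hz : ((0 : Fin (n + 2))).val = 0 := rfl
  have hpref : (SMTI.padded I').mpref 0 0 = some 0 := by
    simp [SMTI.padded]
  have hwpref : (SMTI.padded I').wpref 0 0 = some 0 := by
    simp [SMTI.padded]
  have hncb : (SMTI.padded I').NCBlocks M 0 0 := by
    refine ⟨⟨⟨by rw [hpref]; rfl, by rw [hwpref]; rfl⟩, h0, ?_, ?_⟩, ?_⟩
    · intro w' hw'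
      exfalso
      have hacc := hmatch.1 _ hw'
      have h1 : ((SMTI.padded I').mpref 0 w').isSome := hacc.1
      by_cases hw : 0 < w'.val ∧ w'.val < n + 1
      · simp [SMTI.padded, hw] at h1
        omega
      · by_cases hw0 : w'.val = 0
        · have : w' = 0 := Fin.ext hw0
          exact h0 (this ▸ hw')
        · simp [SMTI.padded, hw, hw0] at h1
          subst h1; exact hw0 rfl
    · intro m' hm'
      exfalso
      have hacc := hmatch.1 _ hm'
      have h1 : ((SMTI.padded I').wpref 0 m').isSome := hacc.2
      by_cases hm : 0 < m'.val ∧ m'.val < n + 1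
      · simp [SMTI.padded, hm] at h1
        omega
      · by_cases hm0 : m'.val = 0
        · have : m' = 0 := Fin.ext hm0
          exact h0 (this ▸ hm')
        · simp [SMTI.padded, hm, hm0] at h1
          subst h1; exact hm0 rfl
    · intro q hq hc
      rcases hc with ⟨_, hlt⟩ | ⟨hlt, _⟩ <;> exact absurd hlt (Fin.not_lt_zero _)
  have := hsemi 0 0 hncb
  have hp1 : p.1 = 0 := le_antisymm this.1 (Fin.zero_le _)
  have hp2 : p.2 = 0 := le_antisymm this.2 (Fin.zero_le _)
  have : p = (0, 0) := Prod.ext hp1 hp2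
  exact h0 (this ▸ hmax.1)
end

section
/- Let I be the padded instance of an SMI instance I', and define Y(i, j) for 0 ≤ i, j ≤ n + 1 by: Y(0, 0) = 1; Y(0, j) = −∞ for 1 ≤ j ≤ n + 1; Y(i, 0) = −∞ for 1 ≤ i ≤ n + 1; and for 1 ≤ i, j ≤ n + 1, Y(i, j) = 1 + max{ Y(i', j') : 0 ≤ i' ≤ i − 1, 0 ≤ j' ≤ j − 1, (m_{i'}, w_{j'}) is an acceptable pair, and (m_i, w_j) and (m_{i'}, w_{j'}) are nonconflicting } if (m_i, w_j) is an acceptable pair (with max over the empty set defined as −∞ and −∞ + 1 = −∞), and Y(i, j) = −∞ if (m_i, w_j) is not acceptable. Then Y(i, j) = X(i, j) for all i, j with 0 ≤ i ≤ n + 1 and 0 ≤ j ≤ n + 1. -/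
open scoped Classical

open Classical in
/-- The dynamic-programming quantity `Y`:
`Y 0 0 = 1`; `Y 0 (j+1) = ⊥`; `Y (i+1) 0 = ⊥`; and for `1 ≤ i, j ≤ n+1`,
`Y i j = 1 + max { Y i' j' : i' < i, j' < j, (m_{i'}, w_{j'}) acceptable, and
(m_i, w_j), (m_{i'}, w_{j'}) nonconflicting }` if `(m_i, w_j)` is acceptable
(the max over the empty set being `⊥`, with `1 + ⊥ = ⊥`), and `⊥` otherwise. -/
noncomputable def Y {n : ℕ} (I : SMTI (Fin (n + 2)) (Fin (n + 2))) : ℕ → ℕ → WithBot ℕ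
  | 0, 0 => 1
  | 0, _ + 1 => ⊥
  | _ + 1, 0 => ⊥
  | i + 1, j + 1 =>
    if hi : i + 1 < n + 2 then
      if hj : j + 1 < n + 2 then
        if I.Acc ⟨i + 1, hi⟩ ⟨j + 1, hj⟩ then
          1 + (Finset.univ.sup fun q : Fin (i + 1) × Fin (j + 1) =>
            if I.Acc ⟨q.1.val, lt_trans q.1.isLt hi⟩ ⟨q.2.val, lt_trans q.2.isLt hj⟩ ∧
                ¬ I.Conflicting (⟨q.1.val, lt_trans q.1.isLt hi⟩, ⟨q.2.val, lt_trans q.2.isLt hj⟩)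
                  (⟨i + 1, hi⟩, ⟨j + 1, hj⟩)
            then Y I q.1.val q.2.val else ⊥)
        else ⊥
      else ⊥
    else ⊥
  termination_by i j => i + j
  decreasing_by
    have h1 := q.1.isLt
    have h2 := q.2.isLt
    omega

namespace SMTI

variable {a b : ℕ}

lemma blocks_anti {I : SMTI (Fin a) (Fin b)} {M M' : Finset (Fin a × Fin b)}
    (hsub : M' ⊆ M) {s t} (h : I.Blocks M s t) : I.Blocks M' s t :=
  ⟨h.1, fun hm => h.2.1 (hsub hm), fun w' hw => h.2.2.1 w' (hsub hw),
    fun m' hm => h.2.2.2 m' (hsub hm)⟩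

lemma matching_subset {I : SMTI (Fin a) (Fin b)} {M M' : Finset (Fin a × Fin b)}
    (hsub : M' ⊆ M) (h : I.IsMatching M) : I.IsMatching M' :=
  ⟨fun p hp => h.1 p (hsub hp), fun p hp q hq => h.2 p (hsub hp) q (hsub hq)⟩

lemma noncrossing_subset {M M' : Finset (Fin a × Fin b)}
    (hsub : M' ⊆ M) (h : Noncrossing M) : Noncrossing M' :=
  fun p hp q hq => h p (hsub hp) q (hsub hq)

/-- Step up: insert a new max pair into a semi-WSNM. -/
lemma step_up {I : SMTI (Fin a) (Fin b)} {M' : Finset (Fin a × Fin b)}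
    {i' i : Fin a} {j' j : Fin b}
    (h : I.IsSemiWSNMWith M' (i', j')) (hii : i' < i) (hjj : j' < j)
    (hacc : I.Acc i j) (hnc : ¬ I.Conflicting (i', j') (i, j)) :
    I.IsSemiWSNMWith (insert (i, j) M') (i, j) ∧ (i, j) ∉ M' := by
  obtain ⟨hmat, hncr, hmax, hblk⟩ := h
  -- bounds on members of M'
  have hb : ∀ q ∈ M', q.1 ≤ i' ∧ q.2 ≤ j' := fun q hq => hmax.2 q hq
  have hnotmem : (i, j) ∉ M' := by
    intro hm
    exact absurd ((hb _ hm).1) (not_le.2 hii)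
  refine ⟨⟨⟨?_, ?_⟩, ?_, ?_, ?_⟩, hnotmem⟩
  · -- acceptable pairs
    intro p hp
    rcases Finset.mem_insert.1 hp with h1 | h1
    · subst h1; exact hacc
    · exact hmat.1 p h1
  · -- injectivity
    intro p hp q hq hpq
    rcases Finset.mem_insert.1 hp with h1 | h1 <;> rcases Finset.mem_insert.1 hq with h2 | h2
    · rw [h1, h2]
    · exfalso; subst h1
      obtain ⟨hq1, hq2⟩ := hb q h2
      rcases hpq with h3 | h3
      · rw [← h3] at hq1; exact absurd hq1 (not_le.2 hii)
      · rw [← h3] at hq2; exact absurd hq2 (not_le.2 hjj)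
    · exfalso; subst h2
      obtain ⟨hp1, hp2⟩ := hb p h1
      rcases hpq with h3 | h3
      · rw [h3] at hp1; exact absurd hp1 (not_le.2 hii)
      · rw [h3] at hp2; exact absurd hp2 (not_le.2 hjj)
    · exact hmat.2 p h1 q h2 hpq
  · -- noncrossing
    intro p hp q hq
    have key : ∀ r ∈ M', ¬ Crossing (i, j) r := by
      intro r hr hc
      obtain ⟨hr1, hr2⟩ := hb r hr
      rcases hc with ⟨h1, _⟩ | ⟨_, h2⟩
      · exact absurd (le_trans (le_of_lt h1) hr1) (not_le.2 hii)
      · exact absurd (le_trans (le_of_lt h2) hr2) (not_le.2 hjj)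
    rcases Finset.mem_insert.1 hp with h1 | h1 <;> rcases Finset.mem_insert.1 hq with h2 | h2
    · subst h1; subst h2; intro hc
      rcases hc with ⟨h3, _⟩ | ⟨h3, _⟩ <;> exact lt_irrefl _ h3
    · subst h1; exact key q h2
    · subst h2; intro hc
      exact key p h1 ((or_comm).1 hc)
    · exact hncr p h1 q h2
  · -- max pair
    refine ⟨Finset.mem_insert_self _ _, ?_⟩
    intro q hq
    rcases Finset.mem_insert.1 hq with h1 | h1
    · subst h1; exact ⟨le_refl _, le_refl _⟩
    · exact ⟨le_trans (hb q h1).1 (le_of_lt hii), le_trans (hb q h1).2 (le_of_lt hjj)⟩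
  · -- blocking condition
    intro s t hsb
    by_contra hcon
    have hB : I.Blocks (insert (i, j) M') s t := hsb.1
    have hncij : ¬ Crossing (s, t) (i, j) := hsb.2 (i, j) (Finset.mem_insert_self _ _)
    -- derive s ≤ i, t ≤ j, (s,t) ≠ (i,j)
    have hst : s ≤ i ∧ t ≤ j ∧ (s < i ∨ t < j) := by
      rcases not_and_or.1 hcon with h1 | h1
      · have hsi : s < i := lt_of_not_ge h1
        have : ¬ (j < t) := fun hjt => hncij (Or.inl ⟨hsi, hjt⟩)
        exact ⟨le_of_lt hsi, not_lt.1 this, Or.inl hsi⟩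
      · have htj : t < j := lt_of_not_ge h1
        have : ¬ (i < s) := fun his => hncij (Or.inr ⟨his, htj⟩)
        exact ⟨not_lt.1 this, le_of_lt htj, Or.inr htj⟩
    -- (s,t) NC-blocks M'
    have hB' : I.NCBlocks M' s t :=
      ⟨blocks_anti (Finset.subset_insert _ _) hB,
       fun q hq => hsb.2 q (Finset.mem_insert_of_mem hq)⟩
    obtain ⟨hi's, hj't⟩ := hblk s t hB'
    -- build a conflicting witness
    apply hnc
    refine ⟨s, t, ⟨hB.1, ?_, ?_, ?_⟩, hi's, hst.1, hj't, hst.2.1⟩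
    · -- (s,t) ∉ {(i',j'),(i,j)}
      intro hm
      rcases Finset.mem_insert.1 hm with h1 | h1
      · exact hB.2.1 (h1 ▸ Finset.mem_insert_of_mem hmax.1)
      · rw [Finset.mem_singleton] at h1
        exact hB.2.1 (h1 ▸ Finset.mem_insert_self _ _)
    · intro w' hw'
      rcases Finset.mem_insert.1 hw' with h1 | h1
      · have : (s, w') ∈ insert (i, j) M' := h1 ▸ Finset.mem_insert_of_mem hmax.1
        exact hB.2.2.1 w' this
      · rw [Finset.mem_singleton] at h1
        exact hB.2.2.1 w' (h1 ▸ Finset.mem_insert_self _ _)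
    · intro m' hm'
      rcases Finset.mem_insert.1 hm' with h1 | h1
      · have : (m', t) ∈ insert (i, j) M' := h1 ▸ Finset.mem_insert_of_mem hmax.1
        exact hB.2.2.2 m' this
      · rw [Finset.mem_singleton] at h1
        exact hB.2.2.2 m' (h1 ▸ Finset.mem_insert_self _ _)

end SMTI
namespace SMTI

variable {a b : ℕ}

/-- Step down: remove the max pair from a semi-WSNM of size ≥ 2. -/
lemma step_down {I : SMTI (Fin a) (Fin b)} {M : Finset (Fin a × Fin b)}
    {i : Fin a} {j : Fin b}
    (h : I.IsSemiWSNMWith M (i, j)) (h2 : 2 ≤ M.card) :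
    ∃ (i' : Fin a) (j' : Fin b), i' < i ∧ j' < j ∧ I.Acc i' j' ∧
      ¬ I.Conflicting (i', j') (i, j) ∧
      I.IsSemiWSNMWith (M.erase (i, j)) (i', j') := by
  obtain ⟨hmat, hncr, hmax, hblk⟩ := h
  have uniq : ∀ p ∈ M, ∀ q ∈ M, p.1 = q.1 ∨ p.2 = q.2 → p = q := hmat.2
  set M' := M.erase (i, j) with hM'
  have hsub : M' ⊆ M := Finset.erase_subset _ _
  have hne : M'.Nonempty := by
    rw [← Finset.card_pos, Finset.card_erase_of_mem hmax.1]; omega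
  obtain ⟨p', hp'M', hmax1⟩ := Finset.exists_max_image M' (fun p => p.1) hne
  have hp'M : p' ∈ M := hsub hp'M'
  have hp'ne : p' ≠ (i, j) := Finset.ne_of_mem_erase hp'M'
  have hmax2 : ∀ q ∈ M', q.2 ≤ p'.2 := by
    intro q hq
    by_cases hqe : q = p'
    · rw [hqe]
    · have hq1 : q.1 ≠ p'.1 := fun he => hqe (uniq q (hsub hq) p' hp'M (Or.inl he))
      have hq1' : q.1 < p'.1 := lt_of_le_of_ne (hmax1 q hq) hq1
      have := hncr q (hsub hq) p' hp'M
      by_contra hlt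
      exact this (Or.inl ⟨hq1', lt_of_not_ge hlt⟩)
  have hp1i : p'.1 < i := by
    have h1 : p'.1 ≤ i := (hmax.2 p' hp'M).1
    rcases lt_or_eq_of_le h1 with h2 | h2
    · exact h2
    · exact absurd (uniq p' hp'M (i, j) hmax.1 (Or.inl h2)) hp'ne
  have hp2j : p'.2 < j := by
    have h1 : p'.2 ≤ j := (hmax.2 p' hp'M).2
    rcases lt_or_eq_of_le h1 with h2 | h2
    · exact h2
    · exact absurd (uniq p' hp'M (i, j) hmax.1 (Or.inr h2)) hp'ne
  -- membership characterization
  have hmem : ∀ q ∈ M, q = (i, j) ∨ (q.1 ≤ p'.1 ∧ q.2 ≤ p'.2) := by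
    intro q hq
    by_cases hqe : q = (i, j)
    · exact Or.inl hqe
    · exact Or.inr ⟨hmax1 q (Finset.mem_erase.2 ⟨hqe, hq⟩),
        hmax2 q (Finset.mem_erase.2 ⟨hqe, hq⟩)⟩
  refine ⟨p'.1, p'.2, hp1i, hp2j, hmat.1 p' hp'M, ?_, ?_⟩
  · -- nonconflicting
    rintro ⟨s, t, hB, hs1, hs2, ht1, ht2⟩
    -- (s,t) NC-blocks M
    have hstM : (s, t) ∉ M := by
      intro hm
      rcases hmem _ hm with h1 | ⟨h1, _⟩
      · exact hB.2.1 (h1 ▸ (Finset.mem_insert_of_mem (Finset.mem_singleton_self _)))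
      · have : (s, t) = p' := uniq (s, t) hm p' hp'M (Or.inl (le_antisymm h1 hs1))
        exact hB.2.1 (this ▸ Finset.mem_insert_self _ _)
    have hBM : I.Blocks M s t := by
      refine ⟨hB.1, hstM, ?_, ?_⟩
      · intro w' hw'
        rcases hmem _ hw' with h1 | ⟨h1, _⟩
        · exact hB.2.2.1 w' (by rw [h1]; exact Finset.mem_insert_of_mem (Finset.mem_singleton_self _))
        · have : (s, w') = p' := uniq (s, w') hw' p' hp'M (Or.inl (le_antisymm h1 hs1))
          exact hB.2.2.1 w' (this ▸ Finset.mem_insert_self _ _)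
      · intro m' hm'
        rcases hmem _ hm' with h1 | ⟨_, h1⟩
        · exact hB.2.2.2 m' (by rw [h1]; exact Finset.mem_insert_of_mem (Finset.mem_singleton_self _))
        · have : (m', t) = p' := uniq (m', t) hm' p' hp'M (Or.inr (le_antisymm h1 ht1))
          exact hB.2.2.2 m' (this ▸ Finset.mem_insert_self _ _)
    have hNCM : I.NCBlocks M s t := by
      refine ⟨hBM, ?_⟩
      intro q hq hc
      rcases hmem _ hq with h1 | ⟨h1, h2⟩
      · subst h1
        rcases hc with ⟨h3, h4⟩ | ⟨h3, h4⟩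
        · exact absurd ht2 (not_le.2 h4)
        · exact absurd hs2 (not_le.2 h3)
      · rcases hc with ⟨h3, _⟩ | ⟨_, h4⟩
        · exact absurd (le_trans h1 hs1) (not_le.2 h3)
        · exact absurd (le_trans h2 ht1) (not_le.2 h4)
    obtain ⟨his, hjt⟩ := hblk s t hNCM
    have : (s, t) = (i, j) := by
      have h1 : s = i := le_antisymm hs2 his
      have h2 : t = j := le_antisymm ht2 hjt
      rw [h1, h2]
    exact hB.2.1 (this ▸ Finset.mem_insert_of_mem (Finset.mem_singleton_self _))
  · -- semi-WSNM with max pair p'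
    refine ⟨matching_subset hsub hmat, noncrossing_subset hsub hncr,
      ⟨?_, fun q hq => ⟨hmax1 q hq, hmax2 q hq⟩⟩, ?_⟩
    · exact (Prod.mk.eta (p := p')) ▸ hp'M'
    intro s t hsb
    by_contra hcon
    -- from not crossing p'
    have hncp' : ¬ Crossing (s, t) p' := hsb.2 p' hp'M'
    have hst : s ≤ p'.1 ∧ t ≤ p'.2 := by
      rcases not_and_or.1 hcon with h1 | h1
      · have hsp : s < p'.1 := lt_of_not_ge h1
        have : ¬ (p'.2 < t) := fun hh => hncp' (Or.inl ⟨hsp, hh⟩)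
        exact ⟨le_of_lt hsp, not_lt.1 this⟩
      · have htp : t < p'.2 := lt_of_not_ge h1
        have : ¬ (p'.1 < s) := fun hh => hncp' (Or.inr ⟨hh, htp⟩)
        exact ⟨not_lt.1 this, le_of_lt htp⟩
    have hsi : s < i := lt_of_le_of_lt hst.1 hp1i
    have htj : t < j := lt_of_le_of_lt hst.2 hp2j
    -- (s,t) blocks M
    have hBM : I.Blocks M s t := by
      refine ⟨hsb.1.1, ?_, ?_, ?_⟩
      · intro hm
        have hne2 : (s, t) ≠ (i, j) := by
          intro he
          rw [Prod.mk.injEq] at he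
          exact absurd he.1 (ne_of_lt hsi)
        exact hsb.1.2.1 (Finset.mem_erase.2 ⟨hne2, hm⟩)
      · intro w' hw'
        have hne2 : (s, w') ≠ (i, j) := by
          intro he
          rw [Prod.mk.injEq] at he
          exact absurd he.1 (ne_of_lt hsi)
        exact hsb.1.2.2.1 w' (Finset.mem_erase.2 ⟨hne2, hw'⟩)
      · intro m' hm'
        have hne2 : (m', t) ≠ (i, j) := by
          intro he
          rw [Prod.mk.injEq] at he
          exact absurd he.2 (ne_of_lt htj)
        exact hsb.1.2.2.2 m' (Finset.mem_erase.2 ⟨hne2, hm'⟩)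
    have hNCM : I.NCBlocks M s t := by
      refine ⟨hBM, ?_⟩
      intro q hq
      by_cases hqe : q = (i, j)
      · subst hqe
        intro hc
        rcases hc with ⟨_, h4⟩ | ⟨h3, _⟩
        · exact absurd h4 (not_lt.2 (le_of_lt htj))
        · exact absurd h3 (not_lt.2 (le_of_lt hsi))
      · exact hsb.2 q (Finset.mem_erase.2 ⟨hqe, hq⟩)
    exact absurd (hblk s t hNCM).1 (not_le.2 hsi)

end SMTI
namespace SMTI

variable {a b : ℕ}

lemma bdd_X {I : SMTI (Fin a) (Fin b)} {i : Fin a} {j : Fin b} :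
    BddAbove {k | ∃ M, I.IsSemiWSNMWith M (i, j) ∧ M.card = k} := by
  refine ⟨Fintype.card (Fin a × Fin b), ?_⟩
  rintro k ⟨M, _, rfl⟩
  exact M.card_le_univ

lemma le_X {I : SMTI (Fin a) (Fin b)} {M : Finset (Fin a × Fin b)} {i : Fin a} {j : Fin b}
    (h : I.IsSemiWSNMWith M (i, j)) : (M.card : WithBot ℕ) ≤ I.X i j := by
  unfold X
  rw [if_pos ⟨M, h⟩]
  exact_mod_cast le_csSup bdd_X ⟨M, h, rfl⟩

lemma X_attained {I : SMTI (Fin a) (Fin b)} {i : Fin a} {j : Fin b}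
    (h : ∃ M, I.IsSemiWSNMWith M (i, j)) :
    ∃ M, I.IsSemiWSNMWith M (i, j) ∧ (M.card : WithBot ℕ) = I.X i j := by
  unfold X
  rw [if_pos h]
  obtain ⟨M0, h0⟩ := h
  obtain ⟨M, hM, hc⟩ := Nat.sSup_mem
    (s := {k | ∃ M, I.IsSemiWSNMWith M (i, j) ∧ M.card = k})
    ⟨M0.card, M0, h0, rfl⟩ bdd_X
  exact ⟨M, hM, by exact_mod_cast congrArg (Nat.cast : ℕ → WithBot ℕ) hc⟩

lemma X_eq_bot {I : SMTI (Fin a) (Fin b)} {i : Fin a} {j : Fin b}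
    (h : ¬ ∃ M, I.IsSemiWSNMWith M (i, j)) : I.X i j = ⊥ := by
  unfold X
  rw [if_neg h]

variable {n : ℕ} {I' : SMTI (Fin n) (Fin n)}

lemma pad_acc_zero {m w : Fin (n + 2)} (h : (padded I').Acc m w) :
    m.val = 0 ↔ w.val = 0 := by
  have h1 : ((padded I').mpref m w).isSome := h.1
  simp only [padded] at h1
  split_ifs at h1 with h2 h3 h4 <;> first | omega | simp at h1

lemma pad_acc_00 (h0 : 0 < n + 2) :
    (padded I').Acc ⟨0, h0⟩ ⟨0, h0⟩ := by
  constructor <;>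
  · simp only [padded]
    rw [dif_neg (by simp), if_pos (by simp)]
    rfl

lemma mem_00 {M : Finset (Fin (n + 2) × Fin (n + 2))} {p} (h0 : 0 < n + 2)
    (h : (padded I').IsSemiWSNMWith M p) :
    ((⟨0, h0⟩ : Fin (n + 2)), (⟨0, h0⟩ : Fin (n + 2))) ∈ M := by
  set z : Fin (n + 2) := ⟨0, h0⟩ with hz
  by_contra hn
  obtain ⟨hmat, hncr, hmax, hblk⟩ := h
  have hp : p ∈ M := hmax.1
  have hnb : (padded I').NCBlocks M z z := by
    refine ⟨⟨pad_acc_00 h0, hn, ?_, ?_⟩, ?_⟩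
    · intro w' hw'
      have hw0 : w'.val = 0 := (pad_acc_zero (hmat.1 _ hw')).1 rfl
      have : w' = z := Fin.ext hw0
      exact absurd (this ▸ hw') hn
    · intro m' hm'
      have hm0 : m'.val = 0 := (pad_acc_zero (hmat.1 _ hm')).2 rfl
      have : m' = z := Fin.ext hm0
      exact absurd (this ▸ hm') hn
    · intro q hq hc
      rcases hc with ⟨_, h4⟩ | ⟨h3, _⟩
      · exact Nat.not_lt_zero _ (Fin.lt_def.1 h4)
      · exact Nat.not_lt_zero _ (Fin.lt_def.1 h3)
  obtain ⟨h1, h2⟩ := hblk z z hnb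
  have hp1 : p.1 = z := Fin.ext (Nat.le_zero.1 (Fin.le_def.1 h1))
  have hp2 : p.2 = z := Fin.ext (Nat.le_zero.1 (Fin.le_def.1 h2))
  rw [← Prod.mk.eta (p := p), hp1, hp2] at hp
  exact hn hp

lemma X_00 (h0 : 0 < n + 2) :
    (padded I').X ⟨0, h0⟩ ⟨0, h0⟩ = 1 := by
  set z : Fin (n + 2) := ⟨0, h0⟩ with hz
  have hzle : ∀ m : Fin (n + 2), z ≤ m := fun m => Fin.le_def.2 (Nat.zero_le _)
  have hS : (padded I').IsSemiWSNMWith {(z, z)} (z, z) := by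
    refine ⟨⟨?_, ?_⟩, ?_, ⟨Finset.mem_singleton_self _, ?_⟩, ?_⟩
    · intro p hp
      rw [Finset.mem_singleton] at hp
      subst hp; exact pad_acc_00 h0
    · intro p hp q hq _
      rw [Finset.mem_singleton] at hp hq; rw [hp, hq]
    · intro p hp q hq hc
      rw [Finset.mem_singleton] at hp hq
      subst hp; subst hq
      rcases hc with ⟨h3, _⟩ | ⟨h3, _⟩ <;> exact lt_irrefl _ h3
    · intro q hq
      rw [Finset.mem_singleton] at hq
      subst hq; exact ⟨le_refl _, le_refl _⟩
    · intro m w _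
      exact ⟨hzle m, hzle w⟩
  have huniq : ∀ M, (padded I').IsSemiWSNMWith M (z, z) → M = {(z, z)} := by
    intro M hM
    refine Finset.Subset.antisymm ?_ (Finset.singleton_subset_iff.2 hM.2.2.1.1)
    intro q hq
    obtain ⟨hq1, hq2⟩ := hM.2.2.1.2 q hq
    have e1 : q.1 = z := Fin.ext (Nat.le_zero.1 (Fin.le_def.1 hq1))
    have e2 : q.2 = z := Fin.ext (Nat.le_zero.1 (Fin.le_def.1 hq2))
    rw [Finset.mem_singleton, ← Prod.mk.eta (p := q), e1, e2]
  have hset : {k | ∃ M, (padded I').IsSemiWSNMWith M (z, z) ∧ M.card = k} = {1} := by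
    ext k
    simp only [Set.mem_setOf_eq, Set.mem_singleton_iff]
    constructor
    · rintro ⟨M, hM, rfl⟩
      rw [huniq M hM]; exact Finset.card_singleton _
    · rintro rfl
      exact ⟨{(z, z)}, hS, Finset.card_singleton _⟩
  unfold X
  rw [if_pos ⟨{(z, z)}, hS⟩, hset, csSup_singleton]
  rfl

lemma X_row0 {j : Fin (n + 2)} (h0 : 0 < n + 2) (hj : j.val ≠ 0) :
    (padded I').X ⟨0, h0⟩ j = ⊥ := by
  apply X_eq_bot
  rintro ⟨M, hM⟩
  have := pad_acc_zero (hM.1.1 _ hM.2.2.1.1)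
  exact hj (this.1 rfl)

lemma X_col0 {i : Fin (n + 2)} (h0 : 0 < n + 2) (hi : i.val ≠ 0) :
    (padded I').X i ⟨0, h0⟩ = ⊥ := by
  apply X_eq_bot
  rintro ⟨M, hM⟩
  have := pad_acc_zero (hM.1.1 _ hM.2.2.1.1)
  exact hi (this.2 rfl)

end SMTI
/-- `Y(i, j) = X(i, j)` for all `0 ≤ i, j ≤ n + 1` on the padded
instance of an SMI instance. -/
theorem stmt12 {n : ℕ} (I' : SMTI (Fin n) (Fin n)) (hI' : I'.NoTies)
    (i j : ℕ) (hi : i ≤ n + 1) (hj : j ≤ n + 1) :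
    Y (SMTI.padded I') i j =
      SMTI.X (SMTI.padded I') ⟨i, by omega⟩ ⟨j, by omega⟩ := by
  have h0 : 0 < n + 2 := by omega
  have key : ∀ k, ∀ i j, i ≤ n + 1 → j ≤ n + 1 → i + j ≤ k →
      ∀ (hi2 : i < n + 2) (hj2 : j < n + 2),
      Y (SMTI.padded I') i j = SMTI.X (SMTI.padded I') ⟨i, hi2⟩ ⟨j, hj2⟩ := by
    intro k
    induction k with
    | zero =>
      intro i j hi hj hk hi2 hj2
      obtain ⟨rfl, rfl⟩ : i = 0 ∧ j = 0 := by omega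
      rw [Y]
      exact (SMTI.X_00 hi2).symm
    | succ k ih =>
      intro i j hi hj hk hi2 hj2
      rcases i with _ | i <;> rcases j with _ | j
      · rw [Y]
        exact (SMTI.X_00 hi2).symm
      · rw [Y]
        exact (SMTI.X_row0 h0 (Nat.succ_ne_zero j)).symm
      · rw [Y]
        exact (SMTI.X_col0 h0 (Nat.succ_ne_zero i)).symm
      · rw [Y, dif_pos hi2, dif_pos hj2]
        by_cases hacc : (SMTI.padded I').Acc ⟨i + 1, hi2⟩ ⟨j + 1, hj2⟩
        · rw [if_pos hacc]
          apply le_antisymm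
          · -- `1 + sup ≤ X`
            obtain ⟨q, -, hSq⟩ := Finset.exists_mem_eq_sup
              (Finset.univ : Finset (Fin (i + 1) × Fin (j + 1))) Finset.univ_nonempty
              (fun q : Fin (i + 1) × Fin (j + 1) =>
                if (SMTI.padded I').Acc ⟨q.1.val, lt_trans q.1.isLt hi2⟩
                      ⟨q.2.val, lt_trans q.2.isLt hj2⟩ ∧
                    ¬ (SMTI.padded I').Conflicting
                      (⟨q.1.val, lt_trans q.1.isLt hi2⟩, ⟨q.2.val, lt_trans q.2.isLt hj2⟩)
                      (⟨i + 1, hi2⟩, ⟨j + 1, hj2⟩)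
                then Y (SMTI.padded I') q.1.val q.2.val else ⊥)
            rw [hSq]
            by_cases hcq : (SMTI.padded I').Acc ⟨q.1.val, lt_trans q.1.isLt hi2⟩
                  ⟨q.2.val, lt_trans q.2.isLt hj2⟩ ∧
                ¬ (SMTI.padded I').Conflicting
                  (⟨q.1.val, lt_trans q.1.isLt hi2⟩, ⟨q.2.val, lt_trans q.2.isLt hj2⟩)
                  (⟨i + 1, hi2⟩, ⟨j + 1, hj2⟩)
            · rw [if_pos hcq]
              have hq1 := q.1.isLt
              have hq2 := q.2.isLt
              have hYX := ih q.1.val q.2.val (by omega) (by omega) (by omega)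
                (lt_trans q.1.isLt hi2) (lt_trans q.2.isLt hj2)
              rw [hYX]
              by_cases hex : ∃ M', (SMTI.padded I').IsSemiWSNMWith M'
                  (⟨q.1.val, lt_trans q.1.isLt hi2⟩, ⟨q.2.val, lt_trans q.2.isLt hj2⟩)
              · obtain ⟨M', hM', hc'⟩ := SMTI.X_attained hex
                rw [← hc']
                obtain ⟨hstep, hnm⟩ := SMTI.step_up hM'
                  (Fin.mk_lt_mk.2 q.1.isLt) (Fin.mk_lt_mk.2 q.2.isLt) hacc hcq.2
                have hle := SMTI.le_X hstep
                rw [Finset.card_insert_of_notMem hnm] at hle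
                calc 1 + (M'.card : WithBot ℕ)
                    = ((M'.card + 1 : ℕ) : WithBot ℕ) := by push_cast; ring
                  _ ≤ _ := hle
              · rw [SMTI.X_eq_bot hex]
                simp
            · rw [if_neg hcq]
              simp
          · -- `X ≤ 1 + sup`
            by_cases hex : ∃ M, (SMTI.padded I').IsSemiWSNMWith M
                (⟨i + 1, hi2⟩, ⟨j + 1, hj2⟩)
            · obtain ⟨M, hM, hcard⟩ := SMTI.X_attained hex
              rw [← hcard]
              have h00m := SMTI.mem_00 h0 hM
              have hijm : ((⟨i + 1, hi2⟩ : Fin (n + 2)), (⟨j + 1, hj2⟩ : Fin (n + 2))) ∈ M :=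
                hM.2.2.1.1
              have hne2 : ((⟨0, h0⟩ : Fin (n + 2)), (⟨0, h0⟩ : Fin (n + 2))) ≠
                  ((⟨i + 1, hi2⟩ : Fin (n + 2)), (⟨j + 1, hj2⟩ : Fin (n + 2))) := by
                intro he
                rw [Prod.mk.injEq, Fin.mk.injEq] at he
                omega
              have h2card : 2 ≤ M.card := Finset.one_lt_card.2 ⟨_, h00m, _, hijm, hne2⟩
              obtain ⟨i', j', hii, hjj, hacc', hnc', hM'⟩ := SMTI.step_down hM h2card
              have hvi : i'.val < i + 1 := Fin.lt_def.1 hii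
              have hvj : j'.val < j + 1 := Fin.lt_def.1 hjj
              have hle1 : ((M.card - 1 : ℕ) : WithBot ℕ) ≤
                  SMTI.X (SMTI.padded I') i' j' := by
                have := SMTI.le_X hM'
                rwa [Finset.card_erase_of_mem hijm] at this
              have hYX := ih i'.val j'.val (by omega) (by omega) (by omega)
                (lt_trans hvi hi2) (lt_trans hvj hj2)
              refine le_trans (le_of_eq (?_ : (M.card : WithBot ℕ) =
                1 + ((M.card - 1 : ℕ) : WithBot ℕ))) (add_le_add le_rfl ?_)
              · have hc1 : M.card = 1 + (M.card - 1) := by omega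
                conv_lhs => rw [hc1]
                rw [Nat.cast_add, Nat.cast_one]
              refine le_trans ?_ (Finset.le_sup
                (Finset.mem_univ ((⟨i'.val, hvi⟩ : Fin (i + 1)), (⟨j'.val, hvj⟩ : Fin (j + 1)))))
              simp only []
              rw [if_pos (⟨hacc', hnc'⟩ :
                (SMTI.padded I').Acc i' j' ∧
                ¬ (SMTI.padded I').Conflicting (i', j') (⟨i + 1, hi2⟩, ⟨j + 1, hj2⟩))]
              rw [← hYX] at hle1
              exact hle1
            · rw [SMTI.X_eq_bot hex]
              exact bot_le
        · rw [if_neg hacc]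
          refine (SMTI.X_eq_bot ?_).symm
          rintro ⟨M, hM⟩
          exact hacc (hM.1.1 _ hM.2.2.1.1)
  exact key (i + j) i j hi hj le_rfl (by omega) (by omega)
end

section
/- Let I be the padded instance of an SMI instance I', let M be a semi-WSNM of I with maximum pair (m_i, w_j) and |M| ≥ 2, let M' = M \ {(m_i, w_j)}, and let (m_x, w_y) be the maximum pair of M'. Then M' is a semi-WSNM of I with maximum pair (m_x, w_y), and the pairs (m_x, w_y) and (m_i, w_j) are nonconflicting. -/
open scoped Classical

/-- removing the maximum pair from a semi-WSNM of size at least 2 of the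
padded instance yields a semi-WSNM whose maximum pair is nonconflicting with the
removed pair. -/
theorem stmt13 {n : ℕ} (I' : SMTI (Fin n) (Fin n)) (hI' : I'.NoTies)
    (M : Finset (Fin (n + 2) × Fin (n + 2))) (p : Fin (n + 2) × Fin (n + 2))
    (h : (SMTI.padded I').IsSemiWSNMWith M p) (hcard : 2 ≤ M.card)
    (q : Fin (n + 2) × Fin (n + 2)) (hq : SMTI.IsMaxPair (M.erase p) q) :
    (SMTI.padded I').IsSemiWSNMWith (M.erase p) q ∧
      ¬ (SMTI.padded I').Conflicting q p := by
  obtain ⟨hMatch, hNC, hMax, hBnd⟩ := h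
  have hqM' : q ∈ M.erase p := hq.1
  have hqM : q ∈ M := Finset.mem_of_mem_erase hqM'
  have hqne : q ≠ p := Finset.ne_of_mem_erase hqM'
  have hpM : p ∈ M := hMax.1
  have hqle : q.1 ≤ p.1 ∧ q.2 ≤ p.2 := hMax.2 q hqM
  have hq1 : q.1 < p.1 := by
    rcases lt_or_eq_of_le hqle.1 with h1 | h1
    · exact h1
    · exact absurd (hMatch.2 q hqM p hpM (Or.inl h1)) hqne
  have hq2 : q.2 < p.2 := by
    rcases lt_or_eq_of_le hqle.2 with h1 | h1
    · exact h1
    · exact absurd (hMatch.2 q hqM p hpM (Or.inr h1)) hqne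
  -- split M-membership into p vs M'
  have hsplit : ∀ r ∈ M, r = p ∨ r ∈ M.erase p := by
    intro r hr
    by_cases hrp : r = p
    · exact Or.inl hrp
    · exact Or.inr (Finset.mem_erase.mpr ⟨hrp, hr⟩)
  constructor
  · refine ⟨⟨fun r hr => hMatch.1 r (Finset.mem_of_mem_erase hr),
      fun r hr s hs h' => hMatch.2 r (Finset.mem_of_mem_erase hr) s
        (Finset.mem_of_mem_erase hs) h'⟩,
      fun r hr s hs => hNC r (Finset.mem_of_mem_erase hr) s (Finset.mem_of_mem_erase hs),
      hq, ?_⟩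
    rintro m w ⟨hb, hncr⟩
    have hncq := hncr q hqM'
    by_cases hcr : SMTI.Crossing (m, w) p
    · rcases hcr with ⟨h1, h2⟩ | ⟨h1, h2⟩
      · -- m < p.1, p.2 < w
        refine ⟨?_, le_of_lt (lt_of_le_of_lt hqle.2 h2)⟩
        by_contra hlt
        exact hncq (Or.inl ⟨lt_of_not_ge hlt, lt_of_le_of_lt hqle.2 h2⟩)
      · -- p.1 < m, w < p.2
        refine ⟨le_of_lt (lt_of_le_of_lt hqle.1 h1), ?_⟩
        by_contra hlt
        exact hncq (Or.inr ⟨lt_of_le_of_lt hqle.1 h1, lt_of_not_ge hlt⟩)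
    · by_cases hmem : (m, w) ∈ M
      · have : (m, w) = p := by
          rcases hsplit _ hmem with h1 | h1
          · exact h1
          · exact absurd h1 hb.2.1
        have hm : m = p.1 := congrArg Prod.fst this
        have hw : w = p.2 := congrArg Prod.snd this
        exact ⟨hm ▸ le_of_lt hq1, hw ▸ le_of_lt hq2⟩
      · by_cases hm1 : m = p.1
        · refine ⟨hm1 ▸ le_of_lt hq1, ?_⟩
          by_contra hlt
          exact hncq (Or.inr ⟨hm1 ▸ hq1, lt_of_not_ge hlt⟩)
        · by_cases hw1 : w = p.2
          · refine ⟨?_, hw1 ▸ le_of_lt hq2⟩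
            by_contra hlt
            exact hncq (Or.inl ⟨lt_of_not_ge hlt, hw1 ▸ hq2⟩)
          · -- genuine NC blocking pair of M
            have hbM : (SMTI.padded I').NCBlocks M m w := by
              refine ⟨⟨hb.1, hmem, ?_, ?_⟩, ?_⟩
              · intro w' hw'
                rcases hsplit _ hw' with h1 | h1
                · exact absurd (congrArg Prod.fst h1) hm1
                · exact hb.2.2.1 w' h1
              · intro m' hm'
                rcases hsplit _ hm' with h1 | h1
                · exact absurd (congrArg Prod.snd h1) hw1
                · exact hb.2.2.2 m' h1
              · intro r hr
                rcases hsplit _ hr with h1 | h1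
                · exact h1 ▸ hcr
                · exact hncr r h1
            have := hBnd m w hbM
            exact ⟨le_trans hqle.1 this.1, le_trans hqle.2 this.2⟩
  · rintro ⟨s, t, hb, hs1, hs2, ht1, ht2⟩
    have hstq : ((s, t) : Fin (n + 2) × Fin (n + 2)) ∉ ({q, p} : Finset _) := hb.2.1
    have hqmem : q ∈ ({q, p} : Finset (Fin (n + 2) × Fin (n + 2))) :=
      Finset.mem_insert_self _ _
    have hpmem : p ∈ ({q, p} : Finset (Fin (n + 2) × Fin (n + 2))) :=
      Finset.mem_insert_of_mem (Finset.mem_singleton_self _)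
    -- any M-pair with first coord s, or second coord t, is p or q
    have hfst : ∀ r ∈ M, r.1 = s → r = p ∨ r = q := by
      intro r hr hrs
      rcases hsplit _ hr with h1 | h1
      · exact Or.inl h1
      · have hle : r.1 ≤ q.1 := (hq.2 r h1).1
        have : r.1 = q.1 := le_antisymm hle (hrs ▸ hs1)
        exact Or.inr (hMatch.2 r hr q hqM (Or.inl this))
    have hsnd : ∀ r ∈ M, r.2 = t → r = p ∨ r = q := by
      intro r hr hrt
      rcases hsplit _ hr with h1 | h1
      · exact Or.inl h1
      · have hle : r.2 ≤ q.2 := (hq.2 r h1).2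
        have : r.2 = q.2 := le_antisymm hle (hrt ▸ ht1)
        exact Or.inr (hMatch.2 r hr q hqM (Or.inr this))
    have hbM : (SMTI.padded I').NCBlocks M s t := by
      refine ⟨⟨hb.1, ?_, ?_, ?_⟩, ?_⟩
      · intro hmem
        rcases hfst _ hmem rfl with h1 | h1
        · exact hstq (by rw [h1]; exact hpmem)
        · exact hstq (by rw [h1]; exact hqmem)
      · intro w' hw'
        rcases hfst _ hw' rfl with h1 | h1
        · exact hb.2.2.1 w' (h1 ▸ hpmem)
        · exact hb.2.2.1 w' (h1 ▸ hqmem)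
      · intro m' hm'
        rcases hsnd _ hm' rfl with h1 | h1
        · exact hb.2.2.2 m' (h1 ▸ hpmem)
        · exact hb.2.2.2 m' (h1 ▸ hqmem)
      · intro r hr hcr
        rcases hsplit _ hr with h1 | h1
        · subst h1
          rcases hcr with ⟨_, h2⟩ | ⟨h2, _⟩
          · exact absurd ht2 (not_le_of_gt h2)
          · exact absurd hs2 (not_le_of_gt h2)
        · have hr1 : r.1 ≤ s := le_trans (hq.2 r h1).1 hs1
          have hr2 : r.2 ≤ t := le_trans (hq.2 r h1).2 ht1
          rcases hcr with ⟨h2, h3⟩ | ⟨h3, h2⟩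
          · exact absurd hr1 (not_le_of_gt h2)
          · exact absurd hr2 (not_le_of_gt h2)
    have hge := hBnd s t hbM
    have hsp : s = p.1 := le_antisymm hs2 hge.1
    have htp : t = p.2 := le_antisymm ht2 hge.2
    exact hstq (by rw [hsp, htp]; exact hpmem)
end

section
/- Let I be the padded instance of an SMI instance I', let M' be a semi-WSNM of I with maximum pair (m_{i'}, w_{j'}), and let (m_i, w_j) be an acceptable pair with i' < i and j' < j such that (m_{i'}, w_{j'}) and (m_i, w_j) are nonconflicting. Then M = M' ∪ {(m_i, w_j)} is a semi-WSNM of I with maximum pair (m_i, w_j) and |M| = |M'| + 1. -/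
open scoped Classical

/-- adding to a semi-WSNM `M'` (with maximum pair `p'`) an acceptable
pair `p` beyond `p'` in both coordinates and nonconflicting with `p'` yields a
semi-WSNM with maximum pair `p`, of size `|M'| + 1`. -/
theorem stmt14 {n : ℕ} (I' : SMTI (Fin n) (Fin n)) (hI' : I'.NoTies)
    (M' : Finset (Fin (n + 2) × Fin (n + 2))) (p' p : Fin (n + 2) × Fin (n + 2))
    (h : (SMTI.padded I').IsSemiWSNMWith M' p')
    (hacc : (SMTI.padded I').Acc p.1 p.2)
    (h1 : p'.1 < p.1) (h2 : p'.2 < p.2)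
    (hnc : ¬ (SMTI.padded I').Conflicting p' p) :
    (SMTI.padded I').IsSemiWSNMWith (insert p M') p ∧
      (insert p M').card = M'.card + 1 := by
  obtain ⟨hM'match, hM'nc, ⟨hp'mem, hp'max⟩, hM'semi⟩ := h
  have hpnot : p ∉ M' := fun hp =>
    absurd ((hp'max p hp).1) (not_le.mpr h1)
  have hlt : ∀ q ∈ M', q.1 < p.1 ∧ q.2 < p.2 := fun q hq =>
    ⟨lt_of_le_of_lt (hp'max q hq).1 h1, lt_of_le_of_lt (hp'max q hq).2 h2⟩
  refine ⟨⟨⟨?_, ?_⟩, ?_, ⟨Finset.mem_insert_self p M', ?_⟩, ?_⟩, ?_⟩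
  · -- acceptability
    intro q hq
    rcases Finset.mem_insert.mp hq with rfl | hq
    · exact hacc
    · exact hM'match.1 q hq
  · -- injectivity
    intro a ha b hb hab
    rcases Finset.mem_insert.mp ha with hap | haM <;>
      rcases Finset.mem_insert.mp hb with hbp | hbM
    · rw [hap, hbp]
    · subst hap
      rcases hab with hab | hab
      · exact absurd hab.symm (ne_of_lt (hlt b hbM).1)
      · exact absurd hab.symm (ne_of_lt (hlt b hbM).2)
    · subst hbp
      rcases hab with hab | hab
      · exact absurd hab (ne_of_lt (hlt a haM).1)
      · exact absurd hab (ne_of_lt (hlt a haM).2)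
    · exact hM'match.2 a haM b hbM hab
  · -- noncrossing
    intro a ha b hb hcr
    rcases Finset.mem_insert.mp ha with hap | haM <;>
      rcases Finset.mem_insert.mp hb with hbp | hbM
    · rw [hap, hbp] at hcr
      rcases hcr with ⟨h', _⟩ | ⟨h', _⟩ <;> exact lt_irrefl _ h'
    · subst hap
      rcases hcr with ⟨h', _⟩ | ⟨_, h''⟩
      · exact absurd h' (not_lt.mpr (le_of_lt (hlt b hbM).1))
      · exact absurd h'' (not_lt.mpr (le_of_lt (hlt b hbM).2))
    · subst hbp
      rcases hcr with ⟨_, h''⟩ | ⟨h', _⟩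
      · exact absurd h'' (not_lt.mpr (le_of_lt (hlt a haM).2))
      · exact absurd h' (not_lt.mpr (le_of_lt (hlt a haM).1))
    · exact hM'nc a haM b hbM hcr
  · -- max pair
    intro q hq
    rcases Finset.mem_insert.mp hq with rfl | hq
    · exact ⟨le_refl _, le_refl _⟩
    · exact ⟨le_of_lt (hlt q hq).1, le_of_lt (hlt q hq).2⟩
  · -- semi condition
    intro m w hncb
    obtain ⟨⟨haccb, hnotin, hmpref, hwpref⟩, hncross⟩ := hncb
    -- (m, w) NC-blocks M'
    have hblocksM' : (SMTI.padded I').NCBlocks M' m w := by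
      refine ⟨⟨haccb, fun h' => hnotin (Finset.mem_insert_of_mem h'), ?_, ?_⟩, ?_⟩
      · exact fun w' hw' => hmpref w' (Finset.mem_insert_of_mem hw')
      · exact fun m' hm' => hwpref m' (Finset.mem_insert_of_mem hm')
      · exact fun q hq => hncross q (Finset.mem_insert_of_mem hq)
    obtain ⟨hm1, hw1⟩ := hM'semi m w hblocksM'
    by_contra hcon
    -- noncrossing with p gives m ≤ p.1 ∧ w ≤ p.2
    have hncp := hncross p (Finset.mem_insert_self p M')
    have hbox : m ≤ p.1 ∧ w ≤ p.2 := by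
      simp only [SMTI.Crossing, not_or, not_and] at hncp
      rcases lt_trichotomy m p.1 with hlt' | heq | hgt
      · constructor
        · exact le_of_lt hlt'
        · exact not_lt.mp (fun hww => hncp.1 hlt' hww)
      · refine ⟨le_of_eq heq, ?_⟩
        by_contra hww
        exact hcon ⟨le_of_eq heq.symm, le_of_lt (not_le.mp hww)⟩
      · have hww : ¬ w < p.2 := fun hww => hncp.2 hgt hww
        exact absurd ⟨le_of_lt hgt, not_lt.mp hww⟩ hcon
    -- build a conflicting blocking pair
    have hp'M : p' ∈ insert p M' := Finset.mem_insert_of_mem hp'mem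
    have hpM : p ∈ insert p M' := Finset.mem_insert_self p M'
    refine hnc ⟨m, w, ⟨haccb, ?_, ?_, ?_⟩, hm1, hbox.1, hw1, hbox.2⟩
    · intro hmem
      rcases Finset.mem_insert.mp hmem with hm' | hm'
      · exact hnotin (hm' ▸ hp'M)
      · exact hnotin ((Finset.mem_singleton.mp hm') ▸ hpM)
    · intro w' hw'
      rcases Finset.mem_insert.mp hw' with hm' | hm'
      · exact hmpref w' (hm' ▸ hp'M)
      · exact hmpref w' ((Finset.mem_singleton.mp hm') ▸ hpM)
    · intro m' hm'
      rcases Finset.mem_insert.mp hm' with hm'' | hm''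
      · exact hwpref m' (hm'' ▸ hp'M)
      · exact hwpref m' ((Finset.mem_singleton.mp hm'') ▸ hpM)
  · exact Finset.card_insert_of_notMem hpnot
end

section
/- Every SMTI instance admits at most one super-SSNM; i.e., if M and M' are both super-stable noncrossing matchings of the same SMTI instance, then M = M'. -/
open scoped Classical

namespace SMTI

variable {Mty Wty : Type}

/-- `(m, w)` is a super blocking pair for `M`: an acceptable pair not in `M` such that
both `m` and `w` weakly prefer each other to their situation in `M`. -/
def SuperBlocks (I : SMTI Mty Wty) (M : Finset (Mty × Wty)) (m : Mty) (w : Wty) : Prop :=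
  I.Acc m w ∧ (m, w) ∉ M ∧
  (∀ w', (m, w') ∈ M → rk (I.mpref m w) ≤ rk (I.mpref m w')) ∧
  (∀ m', (m', w) ∈ M → rk (I.wpref w m) ≤ rk (I.wpref w m'))

/-- `(m, w)` is a strong blocking pair for `M`: an acceptable pair not in `M` such that
one member weakly prefers and the other member strictly prefers the pair to their
situation in `M`. -/
def StrongBlocks (I : SMTI Mty Wty) (M : Finset (Mty × Wty)) (m : Mty) (w : Wty) : Prop :=
  I.Acc m w ∧ (m, w) ∉ M ∧
  (((∀ w', (m, w') ∈ M → rk (I.mpref m w) ≤ rk (I.mpref m w')) ∧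
    (∀ m', (m', w) ∈ M → rk (I.wpref w m) < rk (I.wpref w m'))) ∨
   ((∀ w', (m, w') ∈ M → rk (I.mpref m w) < rk (I.mpref m w')) ∧
    (∀ m', (m', w) ∈ M → rk (I.wpref w m) ≤ rk (I.wpref w m'))))

/-- A super-WSNM: a noncrossing matching with no noncrossing super blocking pair. -/
def IsSuperWSNM [Preorder Mty] [Preorder Wty] (I : SMTI Mty Wty)
    (M : Finset (Mty × Wty)) : Prop :=
  I.IsMatching M ∧ Noncrossing M ∧
    ∀ m w, ¬ (I.SuperBlocks M m w ∧ ∀ q ∈ M, ¬ Crossing (m, w) q)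

/-- A strong-WSNM: a noncrossing matching with no noncrossing strong blocking pair. -/
def IsStrongWSNM [Preorder Mty] [Preorder Wty] (I : SMTI Mty Wty)
    (M : Finset (Mty × Wty)) : Prop :=
  I.IsMatching M ∧ Noncrossing M ∧
    ∀ m w, ¬ (I.StrongBlocks M m w ∧ ∀ q ∈ M, ¬ Crossing (m, w) q)

/-- A super-SSNM: a noncrossing matching with no super blocking pair. -/
def IsSuperSSNM [Preorder Mty] [Preorder Wty] (I : SMTI Mty Wty)
    (M : Finset (Mty × Wty)) : Prop :=
  I.IsMatching M ∧ Noncrossing M ∧ ∀ m w, ¬ I.SuperBlocks M m w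

/-- A strong-SSNM: a noncrossing matching with no strong blocking pair. -/
def IsStrongSSNM [Preorder Mty] [Preorder Wty] (I : SMTI Mty Wty)
    (M : Finset (Mty × Wty)) : Prop :=
  I.IsMatching M ∧ Noncrossing M ∧ ∀ m w, ¬ I.StrongBlocks M m w

end SMTI

namespace SMTIAux

open SMTI

variable {Mty Wty : Type} [LinearOrder Mty] [LinearOrder Wty]

lemma eq_snd {I : SMTI Mty Wty} {M : Finset (Mty × Wty)} (hM : I.IsMatching M)
    {m : Mty} {w w' : Wty} (h : (m, w) ∈ M) (h' : (m, w') ∈ M) : w = w' :=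
  congrArg Prod.snd (hM.2 _ h _ h' (Or.inl rfl))

lemma eq_fst {I : SMTI Mty Wty} {M : Finset (Mty × Wty)} (hM : I.IsMatching M)
    {m m' : Mty} {w : Wty} (h : (m, w) ∈ M) (h' : (m', w) ∈ M) : m = m' :=
  congrArg Prod.fst (hM.2 _ h _ h' (Or.inr rfl))

lemma key_lt (I : SMTI Mty Wty) (M M' : Finset (Mty × Wty))
    (hM : I.IsSuperSSNM M) (hM' : I.IsSuperSSNM M') :
    ∀ k : ℕ, ∀ (m : Mty) (w w' : Wty),
      (M'.filter (fun q => q.2 < w')).card ≤ k →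
      (m, w) ∈ M → (m, w') ∈ M' →
      rk (I.mpref m w') < rk (I.mpref m w) → w' < w → False := by
  intro k
  induction k using Nat.strong_induction_on with
  | _ k ih =>
  intro m w w' hcard hmw hmw' hrk hww
  -- step 1
  have h1 : (m, w') ∉ M := by
    intro h
    exact absurd (eq_snd hM.1 hmw h) (ne_of_gt hww)
  -- step 2
  have hacc : I.Acc m w' := hM'.1.1 _ hmw'
  have hD : ¬ ∀ m', (m', w') ∈ M → rk (I.wpref w' m) ≤ rk (I.wpref w' m') := by
    intro hD
    apply hM.2.2 m w'
    refine ⟨hacc, h1, ?_, hD⟩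
    intro w'' hw''
    have hww'' : w'' = w := eq_snd hM.1 hw'' hmw
    subst hww''
    exact le_of_lt hrk
  push_neg at hD
  obtain ⟨m1, hm1M, hm1rk⟩ := hD
  -- step 3
  have hm1ne : m1 ≠ m := by
    intro h; subst h; exact h1 hm1M
  have hm1lt : m1 < m := by
    rcases lt_trichotomy m1 m with h | h | h
    · exact h
    · exact absurd h hm1ne
    · exact absurd (Or.inl ⟨h, hww⟩) (hM.2.1 (m, w) hmw (m1, w') hm1M)
  -- step 4
  have h4 : (m1, w') ∉ M' := by
    intro h
    exact hm1ne (eq_fst hM'.1 h hmw')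
  -- step 5
  have hacc1 : I.Acc m1 w' := hM.1.1 _ hm1M
  have hC1 : ¬ ∀ w1, (m1, w1) ∈ M' → rk (I.mpref m1 w') ≤ rk (I.mpref m1 w1) := by
    intro hC1
    apply hM'.2.2 m1 w'
    refine ⟨hacc1, h4, hC1, ?_⟩
    intro m'' hm''
    have : m'' = m := eq_fst hM'.1 hm'' hmw'
    subst this
    exact le_of_lt hm1rk
  push_neg at hC1
  obtain ⟨w1, hw1M', hw1rk⟩ := hC1
  -- step 6
  have hw1ne : w1 ≠ w' := by
    intro h; subst h; exact h4 hw1M'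
  have hw1lt : w1 < w' := by
    rcases lt_trichotomy w1 w' with h | h | h
    · exact h
    · exact absurd h hw1ne
    · exact absurd (Or.inr ⟨hm1lt, h⟩) (hM'.2.1 (m, w') hmw' (m1, w1) hw1M')
  -- step 7
  have hmem : (m1, w1) ∈ M'.filter (fun q => q.2 < w') := by
    simp [hw1M', hw1lt]
  have hss : M'.filter (fun q => q.2 < w1) ⊂ M'.filter (fun q => q.2 < w') := by
    constructor
    · intro q hq
      simp only [Finset.mem_filter] at hq ⊢
      exact ⟨hq.1, hq.2.trans hw1lt⟩
    · intro hsub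
      have := hsub hmem
      simp only [Finset.mem_filter] at this
      exact lt_irrefl _ this.2
  have hlt : (M'.filter (fun q => q.2 < w1)).card < k :=
    lt_of_lt_of_le (Finset.card_lt_card hss) hcard
  exact ih _ hlt m1 w' w1 le_rfl hm1M hw1M' hw1rk hw1lt

lemma key_gt (I : SMTI Mty Wty) (M M' : Finset (Mty × Wty))
    (hM : I.IsSuperSSNM M) (hM' : I.IsSuperSSNM M') :
    ∀ k : ℕ, ∀ (m : Mty) (w w' : Wty),
      (M'.filter (fun q => w' < q.2)).card ≤ k →
      (m, w) ∈ M → (m, w') ∈ M' →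
      rk (I.mpref m w') < rk (I.mpref m w) → w < w' → False := by
  intro k
  induction k using Nat.strong_induction_on with
  | _ k ih =>
  intro m w w' hcard hmw hmw' hrk hww
  have h1 : (m, w') ∉ M := by
    intro h
    exact absurd (eq_snd hM.1 hmw h) (ne_of_lt hww)
  have hacc : I.Acc m w' := hM'.1.1 _ hmw'
  have hD : ¬ ∀ m', (m', w') ∈ M → rk (I.wpref w' m) ≤ rk (I.wpref w' m') := by
    intro hD
    apply hM.2.2 m w'
    refine ⟨hacc, h1, ?_, hD⟩
    intro w'' hw''
    have hww'' : w'' = w := eq_snd hM.1 hw'' hmw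
    subst hww''
    exact le_of_lt hrk
  push_neg at hD
  obtain ⟨m1, hm1M, hm1rk⟩ := hD
  have hm1ne : m1 ≠ m := by
    intro h; subst h; exact h1 hm1M
  have hm1lt : m < m1 := by
    rcases lt_trichotomy m m1 with h | h | h
    · exact h
    · exact absurd h.symm hm1ne
    · exact absurd (Or.inr ⟨h, hww⟩) (hM.2.1 (m, w) hmw (m1, w') hm1M)
  have h4 : (m1, w') ∉ M' := by
    intro h
    exact hm1ne (eq_fst hM'.1 h hmw')
  have hacc1 : I.Acc m1 w' := hM.1.1 _ hm1M
  have hC1 : ¬ ∀ w1, (m1, w1) ∈ M' → rk (I.mpref m1 w') ≤ rk (I.mpref m1 w1) := by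
    intro hC1
    apply hM'.2.2 m1 w'
    refine ⟨hacc1, h4, hC1, ?_⟩
    intro m'' hm''
    have : m'' = m := eq_fst hM'.1 hm'' hmw'
    subst this
    exact le_of_lt hm1rk
  push_neg at hC1
  obtain ⟨w1, hw1M', hw1rk⟩ := hC1
  have hw1ne : w1 ≠ w' := by
    intro h; subst h; exact h4 hw1M'
  have hw1lt : w' < w1 := by
    rcases lt_trichotomy w' w1 with h | h | h
    · exact h
    · exact absurd h.symm hw1ne
    · exact absurd (Or.inl ⟨hm1lt, h⟩) (hM'.2.1 (m, w') hmw' (m1, w1) hw1M')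
  have hmem : (m1, w1) ∈ M'.filter (fun q => w' < q.2) := by
    simp [hw1M', hw1lt]
  have hss : M'.filter (fun q => w1 < q.2) ⊂ M'.filter (fun q => w' < q.2) := by
    constructor
    · intro q hq
      simp only [Finset.mem_filter] at hq ⊢
      exact ⟨hq.1, hw1lt.trans hq.2⟩
    · intro hsub
      have := hsub hmem
      simp only [Finset.mem_filter] at this
      exact lt_irrefl _ this.2
  have hlt : (M'.filter (fun q => w1 < q.2)).card < k :=
    lt_of_lt_of_le (Finset.card_lt_card hss) hcard
  exact ih _ hlt m1 w' w1 le_rfl hm1M hw1M' hw1rk hw1lt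

/-- Woman-shared start, `m' < m`. -/
lemma key_lt' (I : SMTI Mty Wty) (M M' : Finset (Mty × Wty))
    (hM : I.IsSuperSSNM M) (hM' : I.IsSuperSSNM M')
    {m m' : Mty} {w : Wty}
    (hmw : (m, w) ∈ M) (hmw' : (m', w) ∈ M')
    (hrk : rk (I.wpref w m') < rk (I.wpref w m)) (hlt : m' < m) : False := by
  have h1 : (m', w) ∉ M := by
    intro h
    exact absurd (eq_fst hM.1 hmw h) (ne_of_gt hlt)
  have hacc : I.Acc m' w := hM'.1.1 _ hmw'
  have hC : ¬ ∀ w1, (m', w1) ∈ M → rk (I.mpref m' w) ≤ rk (I.mpref m' w1) := by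
    intro hC
    apply hM.2.2 m' w
    refine ⟨hacc, h1, hC, ?_⟩
    intro m'' hm''
    have : m'' = m := eq_fst hM.1 hm'' hmw
    subst this
    exact le_of_lt hrk
  push_neg at hC
  obtain ⟨w1, hw1M, hw1rk⟩ := hC
  have hw1ne : w1 ≠ w := by
    intro h; subst h; exact h1 hw1M
  have hw1lt : w1 < w := by
    rcases lt_trichotomy w1 w with h | h | h
    · exact h
    · exact absurd h hw1ne
    · exact absurd (Or.inr ⟨hlt, h⟩) (hM.2.1 (m, w) hmw (m', w1) hw1M)
  exact key_lt I M' M hM' hM _ m' w w1 le_rfl hmw' hw1M hw1rk hw1lt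

/-- Woman-shared start, `m < m'`. -/
lemma key_gt' (I : SMTI Mty Wty) (M M' : Finset (Mty × Wty))
    (hM : I.IsSuperSSNM M) (hM' : I.IsSuperSSNM M')
    {m m' : Mty} {w : Wty}
    (hmw : (m, w) ∈ M) (hmw' : (m', w) ∈ M')
    (hrk : rk (I.wpref w m') < rk (I.wpref w m)) (hlt : m < m') : False := by
  have h1 : (m', w) ∉ M := by
    intro h
    exact absurd (eq_fst hM.1 hmw h) (ne_of_lt hlt)
  have hacc : I.Acc m' w := hM'.1.1 _ hmw'
  have hC : ¬ ∀ w1, (m', w1) ∈ M → rk (I.mpref m' w) ≤ rk (I.mpref m' w1) := by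
    intro hC
    apply hM.2.2 m' w
    refine ⟨hacc, h1, hC, ?_⟩
    intro m'' hm''
    have : m'' = m := eq_fst hM.1 hm'' hmw
    subst this
    exact le_of_lt hrk
  push_neg at hC
  obtain ⟨w1, hw1M, hw1rk⟩ := hC
  have hw1ne : w1 ≠ w := by
    intro h; subst h; exact h1 hw1M
  have hw1lt : w < w1 := by
    rcases lt_trichotomy w w1 with h | h | h
    · exact h
    · exact absurd h.symm hw1ne
    · exact absurd (Or.inl ⟨hlt, h⟩) (hM.2.1 (m, w) hmw (m', w1) hw1M)
  exact key_gt I M' M hM' hM _ m' w w1 le_rfl hmw' hw1M hw1rk hw1lt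

lemma subset_of (I : SMTI Mty Wty) (M M' : Finset (Mty × Wty))
    (hM : I.IsSuperSSNM M) (hM' : I.IsSuperSSNM M') : M ⊆ M' := by
  intro p hp
  by_contra hp'
  obtain ⟨m, w⟩ := p
  have hacc : I.Acc m w := hM.1.1 _ hp
  by_cases hC : ∀ w', (m, w') ∈ M' → rk (I.mpref m w) ≤ rk (I.mpref m w')
  · have hD : ¬ ∀ m', (m', w) ∈ M' → rk (I.wpref w m) ≤ rk (I.wpref w m') := by
      intro hD
      exact hM'.2.2 m w ⟨hacc, hp', hC, hD⟩
    push_neg at hD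
    obtain ⟨m', hm'M', hrk⟩ := hD
    have hne : m' ≠ m := by
      intro h; subst h; exact hp' hm'M'
    rcases lt_trichotomy m' m with h | h | h
    · exact key_lt' I M M' hM hM' hp hm'M' hrk h
    · exact absurd h hne
    · exact key_gt' I M M' hM hM' hp hm'M' hrk h
  · push_neg at hC
    obtain ⟨w', hw'M', hrk⟩ := hC
    have hne : w' ≠ w := by
      intro h; subst h; exact hp' hw'M'
    rcases lt_trichotomy w' w with h | h | h
    · exact key_lt I M M' hM hM' _ m w w' le_rfl hp hw'M' hrk h
    · exact absurd h hne
    · exact key_gt I M M' hM hM' _ m w w' le_rfl hp hw'M' hrk h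

end SMTIAux

/-- every SMTI instance admits at most one super-SSNM. -/
theorem stmt17 {n : ℕ} (I : SMTI (Fin n) (Fin n))
    (M M' : Finset (Fin n × Fin n))
    (hM : I.IsSuperSSNM M) (hM' : I.IsSuperSSNM M') :
    M = M' :=
  Finset.Subset.antisymm (SMTIAux.subset_of I M M' hM hM') (SMTIAux.subset_of I M' M hM' hM)
end

section
/- Every SMTI instance admits at most one strong-SSNM; i.e., if M and M' are both strongly-stable (in the strong-stability sense) noncrossing matchings of the same SMTI instance, then M = M'. -/
open scoped Classical

namespace SMTIProof

open SMTI

/-- Abstract context: two matchings `A`, `B` over `Fin n × Fin n`, both noncrossing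
(w.r.t. abstract strict orders `lta`, `ltb`) and each stable against pairs of the other. -/
structure Ctx (n : ℕ) where
  lta : Fin n → Fin n → Prop
  ltb : Fin n → Fin n → Prop
  A : Finset (Fin n × Fin n)
  B : Finset (Fin n × Fin n)
  pm : Fin n → Fin n → ℕ∞
  pw : Fin n → Fin n → ℕ∞
  tricha : ∀ a a' : Fin n, a = a' ∨ lta a a' ∨ lta a' a
  trichb : ∀ b b' : Fin n, b = b' ∨ ltb b b' ∨ ltb b' b
  irrefla : ∀ a, ¬ lta a a
  minb : ∀ S : Finset (Fin n), S.Nonempty → ∃ m ∈ S, ∀ x ∈ S, ¬ ltb x m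
  mina : ∀ S : Finset (Fin n), S.Nonempty → ∃ m ∈ S, ∀ x ∈ S, ¬ lta x m
  hA : ∀ p ∈ A, ∀ q ∈ A, (p.1 = q.1 ∨ p.2 = q.2) → p = q
  hB : ∀ p ∈ B, ∀ q ∈ B, (p.1 = q.1 ∨ p.2 = q.2) → p = q
  ncA : ∀ p ∈ A, ∀ q ∈ A, ¬ ((lta p.1 q.1 ∧ ltb q.2 p.2) ∨ (lta q.1 p.1 ∧ ltb p.2 q.2))
  ncB : ∀ p ∈ B, ∀ q ∈ B, ¬ ((lta p.1 q.1 ∧ ltb q.2 p.2) ∨ (lta q.1 p.1 ∧ ltb p.2 q.2))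
  sA : ∀ a b, (a,b) ∈ B → (a,b) ∉ A →
      ¬ (((∀ b', (a,b') ∈ A → pm a b ≤ pm a b') ∧ (∀ a', (a',b) ∈ A → pw b a < pw b a')) ∨
         ((∀ b', (a,b') ∈ A → pm a b < pm a b') ∧ (∀ a', (a',b) ∈ A → pw b a ≤ pw b a')))
  sB : ∀ a b, (a,b) ∈ A → (a,b) ∉ B →
      ¬ (((∀ b', (a,b') ∈ B → pm a b ≤ pm a b') ∧ (∀ a', (a',b) ∈ B → pw b a < pw b a')) ∨
         ((∀ b', (a,b') ∈ B → pm a b < pm a b') ∧ (∀ a', (a',b) ∈ B → pw b a ≤ pw b a')))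

variable {n : ℕ}

/-- If `b₁`'s `B`-partner is `a` and she strictly prefers `a₂` (her `A`-partner),
then `a₂` strictly prefers some `B`-partner `b₂` to `b₁`. -/
lemma Ctx.push (c : Ctx n) {a₂ b₁ a : Fin n}
    (h1 : (a₂,b₁) ∈ c.A) (h2 : (a,b₁) ∈ c.B) (h3 : c.pw b₁ a₂ < c.pw b₁ a) :
    ∃ b₂, (a₂,b₂) ∈ c.B ∧ c.pm a₂ b₂ < c.pm a₂ b₁ := by
  have hne : a₂ ≠ a := fun h => absurd h3 (by rw [h]; exact lt_irrefl _)
  have hnB : (a₂,b₁) ∉ c.B := fun h => hne (congrArg Prod.fst (c.hB _ h _ h2 (Or.inr rfl)))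
  by_contra hno
  push_neg at hno
  refine c.sB a₂ b₁ h1 hnB (Or.inl ⟨fun b' hb' => hno b' hb', fun a' ha' => ?_⟩)
  have : a' = a := congrArg Prod.fst (c.hB _ ha' _ h2 (Or.inr rfl))
  rw [this]; exact h3

/-- If `a`'s `A`-partner is `b` and he strictly prefers `b₁` (his `B`-partner),
then `b₁` strictly prefers some `A`-partner `a₂` to `a`. -/
lemma Ctx.push2 (c : Ctx n) {a b b₁ : Fin n}
    (h1 : (a,b) ∈ c.A) (h2 : (a,b₁) ∈ c.B) (h3 : c.pm a b₁ < c.pm a b) :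
    ∃ a₂, (a₂,b₁) ∈ c.A ∧ c.pw b₁ a₂ < c.pw b₁ a := by
  have hne : b₁ ≠ b := fun h => absurd h3 (by rw [h]; exact lt_irrefl _)
  have hnA : (a,b₁) ∉ c.A := fun h => hne (congrArg Prod.snd (c.hA _ h _ h1 (Or.inl rfl)))
  by_contra hno
  push_neg at hno
  refine c.sA a b₁ h2 hnA (Or.inr ⟨fun b' hb' => ?_, fun a' ha' => hno a' ha'⟩)
  have : b' = b := congrArg Prod.snd (c.hA _ hb' _ h1 (Or.inl rfl))
  rw [this]; exact h3

/-- The strict-improvement machine: no configuration where a man is matched in both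
`A` and `B`, strictly prefers his `B`-partner, and his `B`-partner is `ltb`-below
his `A`-partner. -/
lemma Ctx.machine (c : Ctx n) {a b b₁ : Fin n}
    (h1 : (a,b) ∈ c.A) (h2 : (a,b₁) ∈ c.B) (h3 : c.pm a b₁ < c.pm a b)
    (h4 : c.ltb b₁ b) : False := by
  classical
  let S : Finset (Fin n) := Finset.univ.filter fun x =>
    ∃ a b₁, (a,x) ∈ c.A ∧ (a,b₁) ∈ c.B ∧ c.pm a b₁ < c.pm a x ∧ c.ltb b₁ x
  have hS : ∀ x, x ∈ S ↔
      ∃ a b₁, (a,x) ∈ c.A ∧ (a,b₁) ∈ c.B ∧ c.pm a b₁ < c.pm a x ∧ c.ltb b₁ x := by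
    intro x; simp [S]
  obtain ⟨bm, hbm, hmin⟩ := c.minb S ⟨b, (hS b).2 ⟨a, b₁, h1, h2, h3, h4⟩⟩
  obtain ⟨a', b₁', hA', hB', hpm, hlt⟩ := (hS bm).1 hbm
  obtain ⟨a₂, h₂A, hpw⟩ := c.push2 hA' hB' hpm
  obtain ⟨b₂, h₂B, hpm₂⟩ := c.push h₂A hB' hpw
  have hna : a₂ ≠ a' := fun h => absurd hpw (by rw [h]; exact lt_irrefl _)
  have h6 : c.lta a₂ a' := by
    rcases c.tricha a₂ a' with h | h | h
    · exact absurd h hna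
    · exact h
    · exact absurd (Or.inl ⟨h, hlt⟩) (c.ncA _ hA' _ h₂A)
  have hnb : b₂ ≠ b₁' := fun h => hna (congrArg Prod.fst (c.hB _ h₂B _ hB' (Or.inr h)))
  have h8 : c.ltb b₂ b₁' := by
    rcases c.trichb b₂ b₁' with h | h | h
    · exact absurd h hnb
    · exact h
    · exact absurd (Or.inr ⟨h6, h⟩) (c.ncB _ hB' _ h₂B)
  exact hmin b₁' ((hS b₁').2 ⟨a₂, b₂, h₂A, h₂B, hpm₂, h8⟩) hlt

/-- The tie-descent machine: no configuration where a woman `b₁` is matched to `m₂`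
in `A` and `m` in `B`, is indifferent between them, with `m₂` `lta`-below `m`. -/
lemma Ctx.tie (c : Ctx n) {m₂ b₁ m : Fin n}
    (h1 : (m₂,b₁) ∈ c.A) (h2 : (m,b₁) ∈ c.B) (h3 : c.pw b₁ m₂ = c.pw b₁ m)
    (h4 : c.lta m₂ m) : False := by
  classical
  let S : Finset (Fin n) := Finset.univ.filter fun x =>
    ∃ m₂ b₁, (m₂,b₁) ∈ c.A ∧ (x,b₁) ∈ c.B ∧ c.pw b₁ m₂ = c.pw b₁ x ∧ c.lta m₂ x
  have hS : ∀ x, x ∈ S ↔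
      ∃ m₂ b₁, (m₂,b₁) ∈ c.A ∧ (x,b₁) ∈ c.B ∧ c.pw b₁ m₂ = c.pw b₁ x ∧ c.lta m₂ x := by
    intro x; simp [S]
  obtain ⟨mm, hmm, hmin⟩ := c.mina S ⟨m, (hS m).2 ⟨m₂, b₁, h1, h2, h3, h4⟩⟩
  clear h1 h2 h3 h4
  obtain ⟨m₂, b₁, hA', hB', heq, hlt⟩ := (hS mm).1 hmm
  have hne : m₂ ≠ mm := fun h => c.irrefla mm (h ▸ hlt)
  have hnB : (m₂,b₁) ∉ c.B := fun h => hne (congrArg Prod.fst (c.hB _ h _ hB' (Or.inr rfl)))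
  have hex : ∃ b₂, (m₂,b₂) ∈ c.B ∧ c.pm m₂ b₂ ≤ c.pm m₂ b₁ := by
    by_contra hno
    push_neg at hno
    refine c.sB m₂ b₁ hA' hnB (Or.inr ⟨fun b' hb' => hno b' hb', fun a' ha' => ?_⟩)
    have : a' = mm := congrArg Prod.fst (c.hB _ ha' _ hB' (Or.inr rfl))
    rw [this]; exact le_of_eq heq
  obtain ⟨b₂, hb₂, hle⟩ := hex
  have hneb : b₂ ≠ b₁ := fun h => hnB (h ▸ hb₂)
  have h8 : c.ltb b₂ b₁ := by
    rcases c.trichb b₂ b₁ with h | h | h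
    · exact absurd h hneb
    · exact h
    · exact absurd (Or.inr ⟨hlt, h⟩) (c.ncB _ hB' _ hb₂)
  rcases lt_or_eq_of_le hle with hlt2 | heq2
  · exact c.machine hA' hb₂ hlt2 h8
  · have hnA : (m₂,b₂) ∉ c.A := fun h =>
      hneb (congrArg Prod.snd (c.hA _ h _ hA' (Or.inl rfl)))
    have hex2 : ∃ m₅, (m₅,b₂) ∈ c.A ∧ c.pw b₂ m₅ ≤ c.pw b₂ m₂ := by
      by_contra hno
      push_neg at hno
      refine c.sA m₂ b₂ hb₂ hnA (Or.inl ⟨fun b' hb' => ?_, fun a' ha' => hno a' ha'⟩)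
      have : b' = b₁ := congrArg Prod.snd (c.hA _ hb' _ hA' (Or.inl rfl))
      rw [this]; exact le_of_eq heq2
    obtain ⟨m₅, hm₅, hle₅⟩ := hex2
    have hnem : m₅ ≠ m₂ := fun h => hnA (h ▸ hm₅)
    have h10 : c.lta m₅ m₂ := by
      rcases c.tricha m₅ m₂ with h | h | h
      · exact absurd h hnem
      · exact h
      · exact absurd (Or.inl ⟨h, h8⟩) (c.ncA _ hA' _ hm₅)
    rcases lt_or_eq_of_le hle₅ with hlt5 | heq5
    · obtain ⟨b₃, hb₃, hpm₃⟩ := c.push hm₅ hb₂ hlt5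
      have hneb3 : b₃ ≠ b₂ := fun h =>
        hnem (congrArg Prod.fst (c.hB _ hb₃ _ hb₂ (Or.inr h)))
      have h12 : c.ltb b₃ b₂ := by
        rcases c.trichb b₃ b₂ with h | h | h
        · exact absurd h hneb3
        · exact h
        · exact absurd (Or.inr ⟨h10, h⟩) (c.ncB _ hb₂ _ hb₃)
      exact c.machine hm₅ hb₃ hpm₃ h12
    · exact hmin m₂ ((hS m₂).2 ⟨m₅, b₂, hm₅, hb₂, heq5, h10⟩) hlt

lemma trichoLt : ∀ a a' : Fin n, a = a' ∨ a < a' ∨ a' < a := fun a a' => by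
  rcases lt_trichotomy a a' with h | h | h
  · exact Or.inr (Or.inl h)
  · exact Or.inl h
  · exact Or.inr (Or.inr h)

lemma trichoGt : ∀ a a' : Fin n, a = a' ∨ a' < a ∨ a < a' := fun a a' => by
  rcases lt_trichotomy a a' with h | h | h
  · exact Or.inr (Or.inr h)
  · exact Or.inl h
  · exact Or.inr (Or.inl h)

lemma minLt : ∀ S : Finset (Fin n), S.Nonempty → ∃ m ∈ S, ∀ x ∈ S, ¬ x < m :=
  fun S h => ⟨S.min' h, S.min'_mem h, fun x hx => not_lt.2 (S.min'_le x hx)⟩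

lemma minGt : ∀ S : Finset (Fin n), S.Nonempty → ∃ m ∈ S, ∀ x ∈ S, ¬ m < x :=
  fun S h => ⟨S.max' h, S.max'_mem h, fun x hx => not_lt.2 (S.le_max' x hx)⟩

lemma crossLt : ∀ x y u v : Fin n, x < y → u < v → SMTI.Crossing (x,v) (y,u) :=
  fun _ _ _ _ h1 h2 => Or.inl ⟨h1, h2⟩

lemma crossGt : ∀ x y u v : Fin n, y < x → v < u → SMTI.Crossing (x,v) (y,u) :=
  fun _ _ _ _ h1 h2 => Or.inr ⟨h1, h2⟩

/-- Build a context from two strong-SSNMs of the same instance. -/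
def mkCtx (I : SMTI (Fin n) (Fin n)) (M M' : Finset (Fin n × Fin n))
    (hM : I.IsStrongSSNM M) (hM' : I.IsStrongSSNM M')
    (la lb : Fin n → Fin n → Prop)
    (ta : ∀ a a' : Fin n, a = a' ∨ la a a' ∨ la a' a)
    (tb : ∀ b b' : Fin n, b = b' ∨ lb b b' ∨ lb b' b)
    (ia : ∀ a, ¬ la a a)
    (mb : ∀ S : Finset (Fin n), S.Nonempty → ∃ m ∈ S, ∀ x ∈ S, ¬ lb x m)
    (ma : ∀ S : Finset (Fin n), S.Nonempty → ∃ m ∈ S, ∀ x ∈ S, ¬ la x m)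
    (hc : ∀ x y u v : Fin n, la x y → lb u v → SMTI.Crossing (x,v) (y,u)) : Ctx n where
  lta := la
  ltb := lb
  A := M
  B := M'
  pm := fun a b => rk (I.mpref a b)
  pw := fun b a => rk (I.wpref b a)
  tricha := ta
  trichb := tb
  irrefla := ia
  minb := mb
  mina := ma
  hA := hM.1.2
  hB := hM'.1.2
  ncA := by
    rintro ⟨p1,p2⟩ hp ⟨q1,q2⟩ hq h
    rcases h with ⟨h1,h2⟩ | ⟨h1,h2⟩
    · exact hM.2.1 _ hp _ hq (hc p1 q1 q2 p2 h1 h2)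
    · exact hM.2.1 _ hq _ hp (hc q1 p1 p2 q2 h1 h2)
  ncB := by
    rintro ⟨p1,p2⟩ hp ⟨q1,q2⟩ hq h
    rcases h with ⟨h1,h2⟩ | ⟨h1,h2⟩
    · exact hM'.2.1 _ hp _ hq (hc p1 q1 q2 p2 h1 h2)
    · exact hM'.2.1 _ hq _ hp (hc q1 p1 p2 q2 h1 h2)
  sA := fun a b hb hna hd => hM.2.2 a b ⟨hM'.1.1 _ hb, hna, hd⟩
  sB := fun a b ha hnb hd => hM'.2.2 a b ⟨hM.1.1 _ ha, hnb, hd⟩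

def ctxLL (I : SMTI (Fin n) (Fin n)) (M M' : Finset (Fin n × Fin n))
    (hM : I.IsStrongSSNM M) (hM' : I.IsStrongSSNM M') : Ctx n :=
  mkCtx I M M' hM hM' (· < ·) (· < ·) trichoLt trichoLt (fun a => lt_irrefl a)
    minLt minLt crossLt

def ctxGG (I : SMTI (Fin n) (Fin n)) (M M' : Finset (Fin n × Fin n))
    (hM : I.IsStrongSSNM M) (hM' : I.IsStrongSSNM M') : Ctx n :=
  mkCtx I M M' hM hM' (fun a a' => a' < a) (fun b b' => b' < b) trichoGt trichoGt
    (fun a => lt_irrefl a) minGt minGt (fun x y u v h1 h2 => crossGt x y u v h1 h2)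

lemma subset_aux (I : SMTI (Fin n) (Fin n)) (M M' : Finset (Fin n × Fin n))
    (hM : I.IsStrongSSNM M) (hM' : I.IsStrongSSNM M') : M ⊆ M' := by
  intro p hp'
  obtain ⟨m, w⟩ := p
  by_contra hnp
  have hp : (m, w) ∈ M := hp'
  by_cases hmW : ∀ b', (m,b') ∈ M' → rk (I.mpref m w) ≤ rk (I.mpref m b')
  · by_cases hwW : ∀ a', (a',w) ∈ M' → rk (I.wpref w m) ≤ rk (I.wpref w a')
    · -- tie case
      have h1 : ∃ b₁, (m,b₁) ∈ M' ∧ rk (I.mpref m b₁) ≤ rk (I.mpref m w) := by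
        by_contra h
        push_neg at h
        exact (ctxLL I M M' hM hM').sB m w hp hnp
          (Or.inr ⟨fun b' hb' => h b' hb', fun a' ha' => hwW a' ha'⟩)
      obtain ⟨b₁, hb₁, hle1⟩ := h1
      have heq1 : rk (I.mpref m b₁) = rk (I.mpref m w) := le_antisymm hle1 (hmW _ hb₁)
      have hb₁w : b₁ ≠ w := fun h => hnp (h ▸ hb₁)
      have hnA1 : (m,b₁) ∉ M := fun h =>
        hb₁w (congrArg Prod.snd (hM.1.2 _ h _ hp (Or.inl rfl)))
      have h2 : ∃ m₂, (m₂,b₁) ∈ M ∧ rk (I.wpref b₁ m₂) ≤ rk (I.wpref b₁ m) := by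
        by_contra h
        push_neg at h
        refine (ctxLL I M M' hM hM').sA m b₁ hb₁ hnA1
          (Or.inl ⟨fun b' hb' => ?_, fun a' ha' => h a' ha'⟩)
        have : b' = w := congrArg Prod.snd (hM.1.2 _ hb' _ hp (Or.inl rfl))
        rw [this]; exact le_of_eq heq1
      obtain ⟨m₂, hm₂, hle2⟩ := h2
      have hm₂m : m₂ ≠ m := fun h => hnA1 (h ▸ hm₂)
      rcases lt_or_eq_of_le hle2 with hlt2 | heq2
      · obtain ⟨b₂, hb₂, hpm₂⟩ := (ctxLL I M M' hM hM').push hm₂ hb₁ hlt2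
        have hne : b₂ ≠ b₁ := fun h =>
          hm₂m (congrArg Prod.fst (hM'.1.2 _ hb₂ _ hb₁ (Or.inr h)))
        rcases lt_trichotomy b₂ b₁ with h | h | h
        · exact (ctxLL I M M' hM hM').machine hm₂ hb₂ hpm₂ h
        · exact absurd h hne
        · exact (ctxGG I M M' hM hM').machine hm₂ hb₂ hpm₂ h
      · rcases lt_trichotomy m₂ m with h | h | h
        · exact (ctxLL I M M' hM hM').tie hm₂ hb₁ heq2 h
        · exact absurd h hm₂m
        · exact (ctxGG I M M' hM hM').tie hm₂ hb₁ heq2 h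
    · push_neg at hwW
      obtain ⟨a₁, ha₁, hlt⟩ := hwW
      have ham : a₁ ≠ m := fun h => absurd hlt (by rw [h]; exact lt_irrefl _)
      obtain ⟨b₂, hb₂, hpm⟩ := (ctxLL I M' M hM' hM).push ha₁ hp hlt
      have hbw : b₂ ≠ w := fun h =>
        ham (congrArg Prod.fst (hM.1.2 _ hb₂ _ hp (Or.inr h)))
      rcases lt_trichotomy b₂ w with h | h | h
      · exact (ctxLL I M' M hM' hM).machine ha₁ hb₂ hpm h
      · exact absurd h hbw
      · exact (ctxGG I M' M hM' hM).machine ha₁ hb₂ hpm h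
  · push_neg at hmW
    obtain ⟨b₁, hb₁, hlt⟩ := hmW
    have hbw : b₁ ≠ w := fun h => hnp (h ▸ hb₁)
    rcases lt_trichotomy b₁ w with h | h | h
    · exact (ctxLL I M M' hM hM').machine hp hb₁ hlt h
    · exact absurd h hbw
    · exact (ctxGG I M M' hM hM').machine hp hb₁ hlt h

end SMTIProof

/-- every SMTI instance admits at most one strong-SSNM. -/
theorem stmt18 {n : ℕ} (I : SMTI (Fin n) (Fin n))
    (M M' : Finset (Fin n × Fin n))
    (hM : I.IsStrongSSNM M) (hM' : I.IsStrongSSNM M') :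
    M = M' :=
  Finset.Subset.antisymm (SMTIProof.subset_aux I M M' hM hM')
    (SMTIProof.subset_aux I M' M hM' hM)
end
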